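/- arXiv:2501.07205 — 9 statements merged into one kernel-verified Lean document; each statement's English description precedes it below -/
import Mathlib

section
/- The point e_F = (1, b(σ)σ) is an equilibrium of the planar dynamical system (DS): m' = i·m(1−m), i' = δ⁻¹f(m,i), i.e. both right-hand sides vanish there. Moreover the Jacobian matrix of the vector field at e_F is lower triangular with diagonal entries −b(σ)σ and −a(σ)/(α₂δ); in particular both eigenvalues of the Jacobian are real and strictly negative, so e_F is a hyperbolic stable node. -/
noncomputable def sigmaP (α₂ β₁ β₂ : ℝ) : ℝ := α₂ / (β₁ * β₂)

noncomputable def aP (α₂ β₁ β₂ : ℝ) : ℝ := β₁ * (β₂ * sigmaP α₂ β₁ β₂ + α₂)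

noncomputable def bP (α₂ β₁ β₂ : ℝ) : ℝ := β₂ / (β₂ * sigmaP α₂ β₁ β₂ + α₂)

/-- The reduced reaction function `f(M,I)`. -/
noncomputable def fP (α₂ β₁ β₂ M I : ℝ) : ℝ :=
  aP α₂ β₁ β₂ * I * (bP α₂ β₁ β₂ * (sigmaP α₂ β₁ β₂ - 1) + bP α₂ β₁ β₂ * M - I) /
    (α₂ * I + β₂ * (1 - M))

/-- The point `e_F = (1, b(σ)σ)` is an equilibrium of the planar system (DS)
`m' = i m (1-m)`, `i' = δ⁻¹ f(m,i)`; the Jacobian there is lower triangular with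
diagonal entries `-b(σ)σ` and `-a(σ)/(α₂ δ)`, both strictly negative, so `e_F` is a
hyperbolic stable node. -/
theorem eF_hyperbolic_stable_node (α₂ β₁ β₂ δ : ℝ)
    (hα₂ : 0 < α₂) (hβ₁ : 0 < β₁) (hβ₂ : 0 < β₂) (hδ : 0 < δ) :
    let σ := sigmaP α₂ β₁ β₂
    let a := aP α₂ β₁ β₂
    let b := bP α₂ β₁ β₂
    let g₁ : ℝ → ℝ → ℝ := fun m i => i * m * (1 - m)
    let g₂ : ℝ → ℝ → ℝ := fun m i => δ⁻¹ * fP α₂ β₁ β₂ m i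
    -- e_F is an equilibrium
    g₁ 1 (b * σ) = 0 ∧ g₂ 1 (b * σ) = 0 ∧
    -- the Jacobian at e_F is lower triangular: ∂g₁/∂i = 0 there
    HasDerivAt (fun i => g₁ 1 i) 0 (b * σ) ∧
    -- diagonal entries of the Jacobian at e_F
    HasDerivAt (fun m => g₁ m (b * σ)) (-(b * σ)) 1 ∧
    HasDerivAt (fun i => g₂ 1 i) (-(a / (α₂ * δ))) (b * σ) ∧
    -- both (real) eigenvalues are strictly negative
    (-(b * σ) < 0) ∧ (-(a / (α₂ * δ)) < 0) := by
  intro σ a b g₁ g₂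
  have hσ : 0 < σ := div_pos hα₂ (mul_pos hβ₁ hβ₂)
  have hden : 0 < β₂ * σ + α₂ := by positivity
  have ha : 0 < a := mul_pos hβ₁ hden
  have hb : 0 < b := div_pos hβ₂ hden
  have hbσ : 0 < b * σ := mul_pos hb hσ
  have hkey : bP α₂ β₁ β₂ * (sigmaP α₂ β₁ β₂ - 1) + bP α₂ β₁ β₂ * 1
      - b * sigmaP α₂ β₁ β₂ = 0 := by
    show bP α₂ β₁ β₂ * (sigmaP α₂ β₁ β₂ - 1) + bP α₂ β₁ β₂ * 1
      - bP α₂ β₁ β₂ * sigmaP α₂ β₁ β₂ = 0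
    ring
  refine ⟨by simp [g₁], ?_, ?_, ?_, ?_, by linarith, ?_⟩
  · show δ⁻¹ * fP α₂ β₁ β₂ 1 (bP α₂ β₁ β₂ * sigmaP α₂ β₁ β₂) = 0
    unfold fP
    rw [show bP α₂ β₁ β₂ * (sigmaP α₂ β₁ β₂ - 1) + bP α₂ β₁ β₂ * 1
        - bP α₂ β₁ β₂ * sigmaP α₂ β₁ β₂ = 0 from by ring]
    simp
  · have : (fun i : ℝ => g₁ 1 i) = fun _ => 0 := by
      funext i; show i * 1 * (1 - 1) = 0; ring
    rw [this]; exact hasDerivAt_const _ _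
  · have h : HasDerivAt (fun m : ℝ => b * σ * m * (1 - m))
        (b * σ * 1 * (0 - 1) + (b * σ * (1 : ℝ)) * (1 - 1)) 1 := by
      have h1 : HasDerivAt (fun m : ℝ => b * σ * m) (b * σ) 1 := by
        simpa using (hasDerivAt_id (1 : ℝ)).const_mul (b * σ)
      have h2 : HasDerivAt (fun m : ℝ => 1 - m) (0 - 1) 1 :=
        (hasDerivAt_const 1 1).sub (hasDerivAt_id 1)
      have := h1.mul h2
      exact this.congr_deriv (by ring)
    have h' : (fun m : ℝ => g₁ m (b * σ)) = fun m : ℝ => b * σ * m * (1 - m) := by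
      funext m; show b * σ * m * (1 - m) = b * σ * m * (1 - m); rfl
    rw [h']
    convert h using 1
    ring
  · -- derivative of i ↦ δ⁻¹ fP 1 i
    have hF : HasDerivAt (fun i : ℝ => δ⁻¹ * (a * (b * σ - i) / α₂))
        (δ⁻¹ * (a * (0 - 1) / α₂)) (b * σ) := by
      have h2 : HasDerivAt (fun i : ℝ => b * σ - i) (0 - 1) (b * σ) :=
        (hasDerivAt_const _ _).sub (hasDerivAt_id _)
      have := ((h2.const_mul a).div_const α₂).const_mul δ⁻¹
      simpa [mul_comm] using this
    have heq : (fun i : ℝ => g₂ 1 i) =ᶠ[nhds (b * σ)]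
        (fun i : ℝ => δ⁻¹ * (a * (b * σ - i) / α₂)) := by
      filter_upwards [eventually_ne_nhds (ne_of_gt hbσ)] with i hi
      show δ⁻¹ * fP α₂ β₁ β₂ 1 i = δ⁻¹ * (a * (b * σ - i) / α₂)
      have hnum : bP α₂ β₁ β₂ * (sigmaP α₂ β₁ β₂ - 1) + bP α₂ β₁ β₂ * 1 - i
          = b * σ - i := by
        show _ = bP α₂ β₁ β₂ * sigmaP α₂ β₁ β₂ - i; ring
      have hfp : fP α₂ β₁ β₂ 1 i = a * i * (b * σ - i) / (α₂ * i) := by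
        unfold fP
        rw [show bP α₂ β₁ β₂ * (sigmaP α₂ β₁ β₂ - 1) + bP α₂ β₁ β₂ * 1 - i
            = bP α₂ β₁ β₂ * sigmaP α₂ β₁ β₂ - i from by ring]
        show aP α₂ β₁ β₂ * i * (bP α₂ β₁ β₂ * sigmaP α₂ β₁ β₂ - i) / (α₂ * i + β₂ * (1 - 1))
          = aP α₂ β₁ β₂ * i * (bP α₂ β₁ β₂ * sigmaP α₂ β₁ β₂ - i) / (α₂ * i)
        norm_num
      rw [hfp]
      rw [show a * i * (b * σ - i) / (α₂ * i) = a * (b * σ - i) / α₂ by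
        field_simp]
    have := HasDerivAt.congr_of_eventuallyEq hF heq
    refine this.congr_deriv ?_
    field_simp
    ring
  · have : 0 < a / (α₂ * δ) := div_pos ha (by positivity)
    linarith
end

section
/- For every m_e ∈ [0,1), the point (m_e, 0) is an equilibrium of the planar dynamical system (DS): m' = i·m(1−m), i' = δ⁻¹f(m,i), and the Jacobian matrix of the vector field at (m_e, 0) is upper triangular with eigenvalues 0 and δ⁻¹β₁(m_e − (1−σ))/(1−m_e). In particular, the nonzero eigenvalue is strictly negative for m_e ∈ [0, 1−σ) and strictly positive for m_e ∈ (1−σ, 1) (so these equilibria form a continuum of degenerate nodes, stable for m_e < 1−σ and unstable for m_e > 1−σ). -/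
/-- For every `m_e ∈ [0,1)`, the point `(m_e, 0)` is an equilibrium of the planar system
(DS) `m' = i m (1-m)`, `i' = δ⁻¹ f(m,i)`; the Jacobian there is upper triangular with
eigenvalues `0` and `δ⁻¹ β₁ (m_e - (1-σ))/(1-m_e)`, the latter being strictly negative for
`m_e < 1-σ` and strictly positive for `m_e > 1-σ`. -/
theorem continuum_of_degenerate_nodes (α₂ β₁ β₂ δ : ℝ)
    (hα₂ : 0 < α₂) (hβ₁ : 0 < β₁) (hβ₂ : 0 < β₂) (hδ : 0 < δ)
    (me : ℝ) (hme : me ∈ Set.Ico (0 : ℝ) 1) :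
    let σ := sigmaP α₂ β₁ β₂
    let g₁ : ℝ → ℝ → ℝ := fun m i => i * m * (1 - m)
    let g₂ : ℝ → ℝ → ℝ := fun m i => δ⁻¹ * fP α₂ β₁ β₂ m i
    let lam := δ⁻¹ * β₁ * (me - (1 - σ)) / (1 - me)
    -- (m_e, 0) is an equilibrium
    g₁ me 0 = 0 ∧ g₂ me 0 = 0 ∧
    -- the Jacobian at (m_e, 0) is upper triangular: ∂g₂/∂m = 0 there
    HasDerivAt (fun m => g₂ m 0) 0 me ∧
    -- the diagonal entries (eigenvalues) are 0 and δ⁻¹ β₁ (m_e - (1-σ))/(1-m_e)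
    HasDerivAt (fun m => g₁ m 0) 0 me ∧
    HasDerivAt (fun i => g₂ me i) lam 0 ∧
    -- the nonzero eigenvalue is negative for m_e < 1-σ and positive for m_e > 1-σ
    (me < 1 - σ → lam < 0) ∧ (1 - σ < me → 0 < lam) := by
  obtain ⟨hme0, hme1⟩ := hme
  intro σ g₁ g₂ lam
  have h1me : (0:ℝ) < 1 - me := by linarith
  have hS : (0:ℝ) < β₂ * sigmaP α₂ β₁ β₂ + α₂ := by
    have : 0 < sigmaP α₂ β₁ β₂ := div_pos hα₂ (mul_pos hβ₁ hβ₂)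
    positivity
  have hA : 0 < aP α₂ β₁ β₂ := mul_pos hβ₁ hS
  have hAB : aP α₂ β₁ β₂ * bP α₂ β₁ β₂ = β₁ * β₂ := by
    unfold aP bP
    field_simp
  have hg20 : ∀ m : ℝ, g₂ m 0 = 0 := by
    intro m
    simp [g₂, fP]
  refine ⟨by simp [g₁], hg20 me, ?_, ?_, ?_, ?_, ?_⟩
  · have : (fun m => g₂ m 0) = fun _ : ℝ => (0:ℝ) := funext hg20
    rw [this]; exact hasDerivAt_const me 0
  · have : (fun m => g₁ m 0) = fun _ : ℝ => (0:ℝ) := by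
      funext m; simp [g₁]
    rw [this]; exact hasDerivAt_const me 0
  · set A := aP α₂ β₁ β₂ with hAdef
    set B := bP α₂ β₁ β₂ with hBdef
    set K := B * (sigmaP α₂ β₁ β₂ - 1) + B * me with hK
    have hden0 : α₂ * 0 + β₂ * (1 - me) ≠ 0 := by
      have : 0 < β₂ * (1 - me) := mul_pos hβ₂ h1me
      simpa using this.ne'
    have hnum : HasDerivAt (fun i : ℝ => A * i * (K - i))
        (A * 1 * (K - 0) + A * 0 * (0 - 1)) 0 :=
      (((hasDerivAt_id 0).const_mul A).mul ((hasDerivAt_const 0 K).sub (hasDerivAt_id 0)))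
    have hden : HasDerivAt (fun i : ℝ => α₂ * i + β₂ * (1 - me)) α₂ 0 := by
      simpa using ((hasDerivAt_id 0).const_mul α₂).add_const (β₂ * (1 - me))
    have hq := (hnum.div hden hden0).const_mul δ⁻¹
    have hfun : (fun i => g₂ me i)
        = fun i : ℝ => δ⁻¹ * (A * i * (K - i) / (α₂ * i + β₂ * (1 - me))) := by
      funext i
      simp only [g₂, fP, hAdef, hBdef, hK]
    rw [hfun]
    convert hq using 1
    rotate_right
    have hAK : A * K = β₁ * β₂ * (me - (1 - sigmaP α₂ β₁ β₂)) := by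
      rw [hK]; linear_combination (sigmaP α₂ β₁ β₂ - 1 + me) * hAB
    show lam = _
    have hd : (1:ℝ) - me ≠ 0 := h1me.ne'
    simp only [lam]
    field_simp
    linear_combination (δ * β₂ * (1 - me) ^ 2) * hAK + (δ * β₂ * (4*me*σ - 6*me - 2*me^2*σ + 6*me^2 - 2*me^3 - 2*σ + 2)) * hAB + ((1 - δ) * β₂ * (2*me*σ - 3*me - me^2*σ + 3*me^2 - me^3 - σ + 1)) * hAB
    all_goals rfl
  · intro h
    have hnum : δ⁻¹ * β₁ * (me - (1 - σ)) < 0 := by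
      have : me - (1 - σ) < 0 := by linarith
      have hp : 0 < δ⁻¹ * β₁ := by positivity
      exact mul_neg_of_pos_of_neg hp this
    exact div_neg_of_neg_of_pos hnum h1me
  · intro h
    have hnum : 0 < δ⁻¹ * β₁ * (me - (1 - σ)) := by
      have : 0 < me - (1 - σ) := by linarith
      positivity
    exact div_pos hnum h1me
end

section
/- Suppose σ > 1. Then the point e_T = (0, b(σ)(σ−1)) is an equilibrium of the planar dynamical system (DS): m' = i·m(1−m), i' = δ⁻¹f(m,i), and the Jacobian matrix of the vector field at e_T is lower triangular with diagonal entries b(σ)(σ−1) > 0 and −a(σ)b(σ)(σ−1)/(δ(α₂b(σ)(σ−1) + β₂)) < 0; in particular the Jacobian has one strictly positive and one strictly negative real eigenvalue, so e_T is a hyperbolic saddle point. -/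
/-- For `σ > 1`, the point `e_T = (0, b(σ)(σ-1))` is an equilibrium of the planar system
(DS) `m' = i m (1-m)`, `i' = δ⁻¹ f(m,i)`; the Jacobian there is lower triangular with
diagonal entries `b(σ)(σ-1) > 0` and `-a(σ)b(σ)(σ-1)/(δ(α₂ b(σ)(σ-1) + β₂)) < 0`, so
`e_T` is a hyperbolic saddle point. -/
theorem eT_hyperbolic_saddle (α₂ β₁ β₂ δ : ℝ)
    (hα₂ : 0 < α₂) (hβ₁ : 0 < β₁) (hβ₂ : 0 < β₂) (hδ : 0 < δ)
    (hσ : 1 < sigmaP α₂ β₁ β₂) :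
    let σ := sigmaP α₂ β₁ β₂
    let a := aP α₂ β₁ β₂
    let b := bP α₂ β₁ β₂
    let g₁ : ℝ → ℝ → ℝ := fun m i => i * m * (1 - m)
    let g₂ : ℝ → ℝ → ℝ := fun m i => δ⁻¹ * fP α₂ β₁ β₂ m i
    let iT := b * (σ - 1)
    -- e_T is an equilibrium
    g₁ 0 iT = 0 ∧ g₂ 0 iT = 0 ∧
    -- the Jacobian at e_T is lower triangular: ∂g₁/∂i = 0 there
    HasDerivAt (fun i => g₁ 0 i) 0 iT ∧
    -- diagonal entries of the Jacobian at e_T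
    HasDerivAt (fun m => g₁ m iT) (b * (σ - 1)) 0 ∧
    HasDerivAt (fun i => g₂ 0 i) (-(a * b * (σ - 1) / (δ * (α₂ * b * (σ - 1) + β₂)))) iT ∧
    -- one strictly positive and one strictly negative real eigenvalue
    (0 < b * (σ - 1)) ∧ (-(a * b * (σ - 1) / (δ * (α₂ * b * (σ - 1) + β₂))) < 0) := by
  intro σ a b g₁ g₂ iT
  have hden : 0 < β₂ * σ + α₂ := by positivity
  have hb : 0 < b := div_pos hβ₂ hden
  have ha : 0 < a := by
    have : 0 < β₁ * (β₂ * σ + α₂) := by positivity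
    exact this
  have hσ1 : 0 < σ - 1 := sub_pos.mpr hσ
  have hiT : 0 < iT := mul_pos hb hσ1
  have hD : 0 < α₂ * iT + β₂ * (1 - 0) := by
    have : 0 < α₂ * iT := mul_pos hα₂ hiT
    nlinarith
  have hDne : α₂ * iT + β₂ * (1 - 0) ≠ 0 := ne_of_gt hD
  refine ⟨by simp [g₁], ?_, ?_, ?_, ?_, hiT, ?_⟩
  · show δ⁻¹ * fP α₂ β₁ β₂ 0 iT = 0
    simp [fP, iT]
    exact Or.inr (Or.inl (Or.inr (sub_self _)))
  · have : (fun i : ℝ => g₁ 0 i) = fun _ => (0 : ℝ) := by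
      funext i; simp [g₁]
    rw [this]
    exact hasDerivAt_const _ _
  · -- derivative of m ↦ iT * m * (1 - m) at 0
    have h : HasDerivAt (fun m : ℝ => iT * m * (1 - m)) (iT * 1 * (1 - 0) + iT * 0 * (0 - 1)) 0 :=
      ((hasDerivAt_id (0:ℝ)).const_mul iT).mul
      ((hasDerivAt_const (0:ℝ) (1:ℝ)).sub (hasDerivAt_id 0))
    exact h.congr_deriv (by simp [iT])
  · -- derivative of i ↦ δ⁻¹ * fP α₂ β₁ β₂ 0 i at iT
    have hN : HasDerivAt (fun i : ℝ => a * i * (b * (σ - 1) + b * 0 - i))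
        (a * 1 * (b * (σ - 1) + b * 0 - iT) + a * iT * (0 - 1)) iT :=
      (((hasDerivAt_id iT).const_mul a).mul
        ((hasDerivAt_const iT (b * (σ - 1) + b * 0)).sub (hasDerivAt_id iT)))
    have hDd : HasDerivAt (fun i : ℝ => α₂ * i + β₂ * (1 - 0)) α₂ iT := by
      simpa using ((hasDerivAt_id iT).const_mul α₂).add_const (β₂ * (1 - 0))
    have hQ := (hN.div hDd hDne).const_mul δ⁻¹
    have heq : δ⁻¹ * (((a * 1 * (b * (σ - 1) + b * 0 - iT) + a * iT * (0 - 1)) *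
          (α₂ * iT + β₂ * (1 - 0)) -
        a * iT * (b * (σ - 1) + b * 0 - iT) * α₂) / (α₂ * iT + β₂ * (1 - 0)) ^ 2)
        = -(a * b * (σ - 1) / (δ * (α₂ * b * (σ - 1) + β₂))) := by
      have hiTe : iT = b * (σ - 1) := rfl
      rw [hiTe]
      field_simp
      ring
    rw [heq] at hQ
    exact hQ
  · have hpos : 0 < a * b * (σ - 1) / (δ * (α₂ * b * (σ - 1) + β₂)) := by
      apply div_pos
      · positivity
      · have : 0 < α₂ * b * (σ - 1) := by positivity
        positivity
    linarith
end

section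
/- (Proposition 4.1) Let 0 < δ ≤ σ ≤ 1 and let (M_T, I_T) be an FPTW with speed v > 0. Then M_T(z) > 0 and I_T(z) > 0 for all z ∈ ℝ. -/
open Set Filter

/-- Backward+forward uniqueness: a C² solution of a linear second-order ODE with
continuous coefficient that vanishes to first order at a point is identically zero. -/
lemma linear_ode2_zero (v : ℝ) (c y : ℝ → ℝ) (hy : ContDiff ℝ 2 y) (hc : Continuous c)
    (hode : ∀ z, deriv (deriv y) z + v * deriv y z + c z * y z = 0)
    (z₀ : ℝ) (h0 : y z₀ = 0) (h1 : deriv y z₀ = 0) : ∀ z, y z = 0 := by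
  have hy1 : Differentiable ℝ y := hy.differentiable two_ne_zero
  have hy2 : ContDiff ℝ 1 (deriv y) :=
    ((contDiff_succ_iff_deriv (n := 1)).mp (by exact_mod_cast hy)).2.2
  have hy2' : Differentiable ℝ (deriv y) := hy2.differentiable one_ne_zero
  intro w
  set a : ℝ := min z₀ w - 1 with ha
  set b : ℝ := max z₀ w + 1 with hb
  have hab : a ≤ b := by
    rw [ha, hb]; linarith [min_le_max (a := z₀) (b := w)]
  -- clamp function
  set ρ : ℝ → ℝ := fun t => max a (min b t) with hρ
  have hρc : Continuous ρ := continuous_const.max (continuous_const.min continuous_id)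
  have hρmem : ∀ t, ρ t ∈ Icc a b := fun t => ⟨le_max_left _ _, max_le hab (min_le_left _ _)⟩
  have hρid : ∀ t ∈ Icc a b, ρ t = t := by
    intro t ht
    simp [hρ, min_eq_right ht.2, max_eq_right ht.1]
  set cc : ℝ → ℝ := fun t => c (ρ t) with hcc
  obtain ⟨C, hC⟩ := (isCompact_Icc (a := a) (b := b)).exists_bound_of_continuousOn
    hc.continuousOn
  have hCc : ∀ t, |cc t| ≤ C := fun t => by
    simpa using hC (ρ t) (hρmem t)
  have hC0 : 0 ≤ C := le_trans (abs_nonneg _) (hCc 0)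
  set K : NNReal := ⟨1 + |v| + C, by positivity⟩ with hK
  set F : ℝ → ℝ × ℝ → ℝ × ℝ := fun t p => (p.2, -(v * p.2) - cc t * p.1) with hF
  have hlip : ∀ t, LipschitzOnWith K (F t) univ := by
    intro t
    apply LipschitzWith.lipschitzOnWith
    apply LipschitzWith.of_dist_le_mul
    intro p q
    have hd1 : dist p.1 q.1 ≤ dist p q := by rw [Prod.dist_eq]; exact le_max_left _ _
    have hd2 : dist p.2 q.2 ≤ dist p q := by rw [Prod.dist_eq]; exact le_max_right _ _
    rw [Prod.dist_eq]
    have hKd : (K : ℝ) = 1 + |v| + C := rfl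
    apply max_le
    · calc dist p.2 q.2 ≤ dist p q := hd2
        _ ≤ (K:ℝ) * dist p q := by
            nlinarith [dist_nonneg (x := p) (y := q), abs_nonneg v]
    · rw [Real.dist_eq]
      have : -(v * p.2) - cc t * p.1 - (-(v * q.2) - cc t * q.1)
          = -(v * (p.2 - q.2)) - cc t * (p.1 - q.1) := by ring
      rw [this]
      have h2 : |(-(v * (p.2 - q.2)) - cc t * (p.1 - q.1))| ≤ |v| * |p.2 - q.2| + |cc t| * |p.1 - q.1| := by
        calc _ ≤ |(-(v * (p.2 - q.2)))| + |cc t * (p.1 - q.1)| := abs_sub _ _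
          _ = |v| * |p.2 - q.2| + |cc t| * |p.1 - q.1| := by
              rw [abs_neg, abs_mul, abs_mul]
      have e1 : |p.2 - q.2| = dist p.2 q.2 := (Real.dist_eq _ _).symm
      have e2 : |p.1 - q.1| = dist p.1 q.1 := (Real.dist_eq _ _).symm
      rw [e1, e2] at h2
      have := hCc t
      have habs : |cc t| * dist p.1 q.1 ≤ C * dist p q :=
        mul_le_mul this hd1 dist_nonneg hC0
      have habs2 : |v| * dist p.2 q.2 ≤ |v| * dist p q :=
        mul_le_mul_of_nonneg_left hd2 (abs_nonneg v)
      have : (K:ℝ) = 1 + |v| + C := rfl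
      nlinarith [dist_nonneg (x := p) (y := q)]
  set f : ℝ → ℝ × ℝ := fun t => (y t, deriv y t) with hf
  have hf' : ∀ t ∈ Ioo a b, HasDerivAt f (F t (f t)) t := by
    intro t ht
    have h1' : HasDerivAt y (deriv y t) t := (hy1 t).hasDerivAt
    have h2' : HasDerivAt (deriv y) (deriv (deriv y) t) t := (hy2' t).hasDerivAt
    have hct : cc t = c t := congrArg c (hρid t (Ioo_subset_Icc_self ht))
    have he : deriv (deriv y) t = -(v * deriv y t) - cc t * y t := by
      have := hode t; rw [hct]; linarith
    have hFf : F t (f t) = (deriv y t, deriv (deriv y) t) := by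
      show (deriv y t, -(v * deriv y t) - cc t * y t) = _
      rw [he]
    rw [hFf]
    exact h1'.prodMk h2'
  have hg' : ∀ t ∈ Ioo a b, HasDerivAt (fun _ : ℝ => ((0 : ℝ), (0 : ℝ))) (F t ((0:ℝ),(0:ℝ))) t := by
    intro t ht
    have : F t ((0:ℝ),(0:ℝ)) = (0, 0) := by simp [hF]
    rw [this]
    exact hasDerivAt_const t _
  have ht₀ : z₀ ∈ Ioo a b := by
    constructor
    · have : min z₀ w ≤ z₀ := min_le_left _ _
      simp only [ha]; linarith
    · have : z₀ ≤ max z₀ w := le_max_left _ _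
      simp only [hb]; linarith
  have hw : w ∈ Icc a b := by
    constructor
    · have : min z₀ w ≤ w := min_le_right _ _
      simp only [ha]; linarith
    · have : w ≤ max z₀ w := le_max_right _ _
      simp only [hb]; linarith
  have heq : f z₀ = ((0:ℝ),(0:ℝ)) := by simp [hf, h0, h1]
  have := ODE_solution_unique_of_mem_Icc (v := F) (s := fun _ => univ) (K := K)
    (fun t _ => hlip t) ht₀
    (Continuous.continuousOn (by fun_prop))
    hf' (fun _ _ => trivial)
    continuousOn_const hg' (fun _ _ => trivial) heq
  have := this hw
  simpa [hf] using congrArg Prod.fst this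



/-- A full transition permanent form travelling wave ([FPTW]) with speed `v`:
a pair of C² profiles with values in `[0,1]²`, satisfying the travelling-wave ODEs
`M'' + v M' + I M (1 - M) = 0` and `δ (D I'' + v I') + f(M, I) = 0`, connecting
the fully saturated state `(1, b(σ)σ)` at `-∞` to the zero state `(0,0)` at `+∞`. -/
structure IsFPTW (α₂ β₁ β₂ δ D v : ℝ) (M I : ℝ → ℝ) : Prop where
  smoothM : ContDiff ℝ 2 M
  smoothI : ContDiff ℝ 2 I
  rangeM : ∀ z, M z ∈ Set.Icc (0 : ℝ) 1
  rangeI : ∀ z, I z ∈ Set.Icc (0 : ℝ) 1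
  odeM : ∀ z, deriv (deriv M) z + v * deriv M z + I z * M z * (1 - M z) = 0
  odeI : ∀ z, δ * (D * deriv (deriv I) z + v * deriv I z) + fP α₂ β₁ β₂ (M z) (I z) = 0
  limM_top : Filter.Tendsto M Filter.atTop (nhds 0)
  limI_top : Filter.Tendsto I Filter.atTop (nhds 0)
  limM_bot : Filter.Tendsto M Filter.atBot (nhds 1)
  limI_bot : Filter.Tendsto I Filter.atBot (nhds (bP α₂ β₁ β₂ * sigmaP α₂ β₁ β₂))

/-- Proposition 4.1: an [FPTW] has strictly positive components everywhere. -/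
theorem fptw_positive (α₂ β₁ β₂ δ D v : ℝ)
    (hα₂ : 0 < α₂) (hβ₁ : 0 < β₁) (hβ₂ : 0 < β₂) (hD : 0 < D)
    (hδ : 0 < δ) (hδσ : δ ≤ sigmaP α₂ β₁ β₂) (hσ : sigmaP α₂ β₁ β₂ ≤ 1)
    (hv : 0 < v) (M I : ℝ → ℝ) (h : IsFPTW α₂ β₁ β₂ δ D v M I) :
    ∀ z : ℝ, 0 < M z ∧ 0 < I z := by
  have hMc : Continuous M := h.smoothM.continuous
  have hIc : Continuous I := h.smoothI.continuous
  -- Step 1 : M < 1 everywhere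
  have hMlt1 : ∀ z, M z < 1 := by
    intro z₀
    rcases lt_or_eq_of_le (h.rangeM z₀).2 with hlt | heq
    · exact hlt
    · exfalso
      set N : ℝ → ℝ := fun z => 1 - M z with hN
      have hNsm : ContDiff ℝ 2 N := contDiff_const.sub h.smoothM
      have hdN : ∀ z, deriv N z = -deriv M z := fun z => by
        rw [hN]; exact deriv_const_sub 1
      have hdN' : deriv N = fun z => -deriv M z := funext hdN
      have hddN : ∀ z, deriv (deriv N) z = -deriv (deriv M) z := fun z => by
        rw [hdN']; exact deriv.neg
      have hode : ∀ z, deriv (deriv N) z + v * deriv N z + (-(I z * M z)) * N z = 0 := by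
        intro z
        have := h.odeM z
        rw [hddN, hdN, hN]
        ring_nf
        ring_nf at this
        linarith
      have hmin : IsLocalMin N z₀ := Filter.Eventually.of_forall fun z => by
        simp only [hN]
        have h2 := (h.rangeM z).2
        rw [heq]; linarith
      have hd0 : deriv N z₀ = 0 := hmin.deriv_eq_zero
      have hN0 : N z₀ = 0 := by simp [hN, ← heq]
      have hzero := linear_ode2_zero v (fun z => -(I z * M z)) N hNsm
        (by fun_prop) hode z₀ hN0 hd0
      have hM1 : M = fun _ => (1:ℝ) := by
        funext z; have := hzero z; simp only [hN] at this; linarith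
      have : Filter.Tendsto M Filter.atTop (nhds 1) := by
        rw [hM1]; exact tendsto_const_nhds
      have := tendsto_nhds_unique h.limM_top this
      norm_num at this
  -- Step 2 : M > 0 everywhere
  have hMpos : ∀ z, 0 < M z := by
    intro z₀
    rcases lt_or_eq_of_le (h.rangeM z₀).1 with hlt | heq
    · exact hlt
    · exfalso
      have hode : ∀ z, deriv (deriv M) z + v * deriv M z + (I z * (1 - M z)) * M z = 0 := by
        intro z
        have := h.odeM z
        nlinarith [this]
      have hmin : IsLocalMin M z₀ := Filter.Eventually.of_forall fun z => by
        rw [← heq]; exact (h.rangeM z).1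
      have hd0 : deriv M z₀ = 0 := hmin.deriv_eq_zero
      have hzero := linear_ode2_zero v (fun z => I z * (1 - M z)) M h.smoothM
        (by fun_prop) hode z₀ heq.symm hd0
      have : Filter.Tendsto M Filter.atBot (nhds 0) := by
        have : M = fun _ => (0:ℝ) := funext hzero
        rw [this]; exact tendsto_const_nhds
      have := tendsto_nhds_unique h.limM_bot this
      norm_num at this
  -- Step 3 : I > 0 everywhere
  have hIpos : ∀ z, 0 < I z := by
    intro z₀
    rcases lt_or_eq_of_le (h.rangeI z₀).1 with hlt | heq
    · exact hlt
    · exfalso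
      set q : ℝ → ℝ := fun z =>
        aP α₂ β₁ β₂ * (bP α₂ β₁ β₂ * (sigmaP α₂ β₁ β₂ - 1) + bP α₂ β₁ β₂ * M z - I z) /
          (α₂ * I z + β₂ * (1 - M z)) with hq
      have hden : ∀ z, 0 < α₂ * I z + β₂ * (1 - M z) := by
        intro z
        have h1 := (h.rangeI z).1
        have h2 := hMlt1 z
        nlinarith
      have hqc : Continuous q := by
        rw [hq]
        exact (by fun_prop : Continuous fun z =>
            aP α₂ β₁ β₂ * (bP α₂ β₁ β₂ * (sigmaP α₂ β₁ β₂ - 1) + bP α₂ β₁ β₂ * M z - I z)).div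
          (by fun_prop) (fun z => (hden z).ne')
      have hδD : δ * D ≠ 0 := by positivity
      have key : ∀ z, fP α₂ β₁ β₂ (M z) (I z) = I z * q z := by
        intro z
        rw [hq]
        unfold fP
        rw [show aP α₂ β₁ β₂ * I z *
            (bP α₂ β₁ β₂ * (sigmaP α₂ β₁ β₂ - 1) + bP α₂ β₁ β₂ * M z - I z)
          = I z * (aP α₂ β₁ β₂ *
            (bP α₂ β₁ β₂ * (sigmaP α₂ β₁ β₂ - 1) + bP α₂ β₁ β₂ * M z - I z)) from by ring,
          mul_div_assoc]
      have hode : ∀ z, deriv (deriv I) z + (v / D) * deriv I z + (q z / (δ * D)) * I z = 0 := by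
        intro z
        have h2 : δ * (D * deriv (deriv I) z + v * deriv I z) + I z * q z = 0 := by
          rw [← key z]; exact h.odeI z
        have e : deriv (deriv I) z + (v / D) * deriv I z + (q z / (δ * D)) * I z
            = (δ * (D * deriv (deriv I) z + v * deriv I z) + I z * q z) / (δ * D) := by
          field_simp
        rw [e, h2, zero_div]
      have hmin : IsLocalMin I z₀ := Filter.Eventually.of_forall fun z => by
        rw [← heq]; exact (h.rangeI z).1
      have hd0 : deriv I z₀ = 0 := hmin.deriv_eq_zero
      have hzero := linear_ode2_zero (v / D) (fun z => q z / (δ * D)) I h.smoothI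
        (hqc.div_const _) hode z₀ heq.symm hd0
      have hlim0 : Filter.Tendsto I Filter.atBot (nhds 0) := by
        have : I = fun _ => (0:ℝ) := funext hzero
        rw [this]; exact tendsto_const_nhds
      have heq2 := tendsto_nhds_unique h.limI_bot hlim0
      have hσpos : 0 < sigmaP α₂ β₁ β₂ := div_pos hα₂ (mul_pos hβ₁ hβ₂)
      have hbpos : 0 < bP α₂ β₁ β₂ := div_pos hβ₂ (by positivity)
      nlinarith [mul_pos hbpos hσpos]
  exact fun z => ⟨hMpos z, hIpos z⟩
end

section
/- (Proposition 4.2) Let 0 < δ ≤ σ ≤ 1 and let (M_T, I_T) be an FPTW with speed v > 0. Then M_T(z) < 1 and I_T(z) < b(σ)σ for all z ∈ ℝ. -/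
open Filter Topology

lemma diff_of_contDiff2 {f : ℝ → ℝ} (hf : ContDiff ℝ 2 f) :
    Differentiable ℝ f ∧ Differentiable ℝ (deriv f) := by
  have h : ContDiff ℝ (1 + 1) f := by norm_num; exact hf
  obtain ⟨h1, -, h2⟩ := contDiff_succ_iff_deriv.mp h
  exact ⟨h1, h2.differentiable one_ne_zero⟩

lemma second_deriv_nonpos_of_max {f : ℝ → ℝ} (hf : ContDiff ℝ 2 f) {a : ℝ}
    (hmax : ∀ y, f y ≤ f a) : deriv (deriv f) a ≤ 0 := by
  obtain ⟨h1, h2⟩ := diff_of_contDiff2 hf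
  by_contra hpos
  push_neg at hpos
  have hloc : IsLocalMax f a := Filter.Eventually.of_forall hmax
  have hg0 : deriv f a = 0 := hloc.deriv_eq_zero
  have hslope : Tendsto (slope (deriv f) a) (𝓝[≠] a) (𝓝 (deriv (deriv f) a)) :=
    hasDerivAt_iff_tendsto_slope.mp (h2 a).hasDerivAt
  have hslope' : Tendsto (slope (deriv f) a) (𝓝[>] a) (𝓝 (deriv (deriv f) a)) :=
    hslope.mono_left (nhdsWithin_mono a fun x hx => ne_of_gt hx)
  have hev : ∀ᶠ z in 𝓝[>] a, 0 < slope (deriv f) a z :=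
    hslope'.eventually (eventually_gt_nhds hpos)
  obtain ⟨u, hu, hsub⟩ := mem_nhdsGT_iff_exists_Ioo_subset.mp hev
  have hgpos : ∀ z ∈ Set.Ioo a u, 0 < deriv f z := by
    intro z hz
    have hs := hsub hz
    have hza : 0 < z - a := sub_pos.mpr hz.1
    have hs' : 0 < slope (deriv f) a z := hs
    rw [slope_def_field, hg0, sub_zero] at hs'
    rename' hs' => this
    exact (div_pos_iff.mp this).resolve_right (fun h => absurd hza (not_lt.mpr h.2.le)) |>.1
  have hmono : StrictMonoOn f (Set.Icc a u) := by
    apply strictMonoOn_of_deriv_pos (convex_Icc a u) (h1.continuous.continuousOn)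
    intro z hz
    rw [interior_Icc] at hz
    exact hgpos z hz
  have hau : a < u := hu.out
  have hmid : a < (a + u) / 2 := by linarith
  have : f a < f ((a + u) / 2) :=
    hmono (Set.left_mem_Icc.mpr hau.le) ⟨hmid.le, by linarith⟩ hmid
  exact absurd (hmax ((a + u) / 2)) (not_le.mpr this)



/-- Proposition 4.2: an [FPTW] satisfies `M_T < 1` and `I_T < b(σ)σ` everywhere. -/
theorem fptw_upper_bounds (α₂ β₁ β₂ δ D v : ℝ)
    (hα₂ : 0 < α₂) (hβ₁ : 0 < β₁) (hβ₂ : 0 < β₂) (hD : 0 < D)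
    (hδ : 0 < δ) (hδσ : δ ≤ sigmaP α₂ β₁ β₂) (hσ : sigmaP α₂ β₁ β₂ ≤ 1)
    (hv : 0 < v) (M I : ℝ → ℝ) (h : IsFPTW α₂ β₁ β₂ δ D v M I) :
    ∀ z : ℝ, M z < 1 ∧ I z < bP α₂ β₁ β₂ * sigmaP α₂ β₁ β₂ := by
  obtain ⟨hM1, hM2⟩ := diff_of_contDiff2 h.smoothM
  obtain ⟨hI1, hI2⟩ := diff_of_contDiff2 h.smoothI
  -- Part 1 : M < 1 everywhere
  have hMlt : ∀ z, M z < 1 := by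
    by_contra hcon
    push_neg at hcon
    obtain ⟨z₀, hz₀⟩ := hcon
    have hM1z : M z₀ = 1 := le_antisymm (h.rangeM z₀).2 hz₀
    have hmaxM : ∀ y, M y ≤ M z₀ := fun y => by rw [hM1z]; exact (h.rangeM y).2
    have hlocM : IsLocalMax M z₀ := Filter.Eventually.of_forall hmaxM
    have hM'0 : deriv M z₀ = 0 := hlocM.deriv_eq_zero
    set E : ℝ → ℝ := fun z => (1 - M z) ^ 2 + (deriv M z) ^ 2 with hE
    have hE0 : E z₀ = 0 := by simp [hE, hM1z, hM'0]
    have hEderiv : ∀ z, HasDerivAt E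
        (2 * (1 - M z) ^ 1 * (-(deriv M z)) + 2 * (deriv M z) ^ 1 * (deriv (deriv M) z)) z := by
      intro z
      have hA : HasDerivAt (fun z => (1 - M z) ^ 2) (2 * (1 - M z) ^ 1 * (-(deriv M z))) z :=
        ((hasDerivAt_const z (1 : ℝ)).sub (hM1 z).hasDerivAt).pow 2 |>.congr_deriv (by simp only [Pi.sub_apply]; ring)
      have hB : HasDerivAt (fun z => (deriv M z) ^ 2)
          (2 * (deriv M z) ^ 1 * (deriv (deriv M) z)) z := ((hM2 z).hasDerivAt).pow 2
      exact hA.add hB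
    set w : ℝ → ℝ := fun z => Real.exp (-2 * z) * E z with hw
    have hwderiv : ∀ z, HasDerivAt w
        (Real.exp (-2 * z) * (-2) * E z +
          Real.exp (-2 * z) *
            (2 * (1 - M z) ^ 1 * (-(deriv M z)) + 2 * (deriv M z) ^ 1 * (deriv (deriv M) z))) z := by
      intro z
      have he : HasDerivAt (fun z : ℝ => Real.exp (-2 * z)) (Real.exp (-2 * z) * (-2)) z := by
        have : HasDerivAt (fun z : ℝ => -2 * z) (-2) z := by
          simpa using (hasDerivAt_id z).const_mul (-2 : ℝ)
        exact this.exp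
      exact he.mul (hEderiv z)
    have hwnonpos : ∀ z, deriv w z ≤ 0 := by
      intro z
      rw [(hwderiv z).deriv]
      have hode := h.odeM z
      have hIr := h.rangeI z
      have hMr := h.rangeM z
      have hexp : 0 < Real.exp (-2 * z) := Real.exp_pos _
      have key : 2 * (1 - M z) ^ 1 * (-(deriv M z)) + 2 * (deriv M z) ^ 1 * (deriv (deriv M) z)
          ≤ 2 * E z := by
        have hdd : deriv (deriv M) z = -(v * deriv M z + I z * M z * (1 - M z)) := by linarith
        rw [hdd]
        simp only [hE, pow_one]
        obtain ⟨hi0, hi1⟩ := hIr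
        obtain ⟨hm0, hm1⟩ := hMr
        nlinarith [sq_nonneg ((1 - M z) + deriv M z), sq_nonneg ((1 - M z) - deriv M z),
          mul_nonneg hv.le (sq_nonneg (deriv M z)),
          mul_nonneg (mul_nonneg hi0 hm0) (sq_nonneg ((1 - M z) + deriv M z)),
          mul_nonneg (sub_nonneg.mpr (mul_le_one₀ hi1 hm0 hm1))
            (add_nonneg (sq_nonneg (1 - M z)) (sq_nonneg (deriv M z)))]
      calc Real.exp (-2 * z) * (-2) * E z +
            Real.exp (-2 * z) *
              (2 * (1 - M z) ^ 1 * (-(deriv M z)) + 2 * (deriv M z) ^ 1 * (deriv (deriv M) z))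
          ≤ Real.exp (-2 * z) * (-2) * E z + Real.exp (-2 * z) * (2 * E z) := by
            have := mul_le_mul_of_nonneg_left key hexp.le
            linarith
        _ = 0 := by ring
    have hanti : AntitoneOn w (Set.Ici z₀) := by
      apply antitoneOn_of_deriv_nonpos (convex_Ici z₀)
      · exact Continuous.continuousOn (by
          have : Continuous E := by
            rw [hE]; exact ((continuous_const.sub hM1.continuous).pow 2).add (hM2.continuous.pow 2)
          rw [hw]; exact (Real.continuous_exp.comp (continuous_const.mul continuous_id)).mul this)
      · intro z _; exact ((hwderiv z).differentiableAt.differentiableWithinAt)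
      · intro z _; exact hwnonpos z
    have hMeq1 : ∀ z ≥ z₀, M z = 1 := by
      intro z hz
      have h1 : w z ≤ w z₀ := hanti (Set.left_mem_Icc.mp ⟨le_refl z₀, le_refl z₀⟩ |> fun _ => Set.mem_Ici.mpr le_rfl) (Set.mem_Ici.mpr hz) hz
      have h2 : w z₀ = 0 := by simp [hw, hE0]
      have h3 : 0 ≤ w z := by
        have : 0 ≤ E z := by positivity
        have := Real.exp_pos (-2 * z)
        positivity
      have hEz : E z = 0 := by
        have hwz : w z = 0 := le_antisymm (h2 ▸ h1) h3
        have := Real.exp_pos (-2 * z)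
        rw [hw] at hwz
        simp only at hwz
        nlinarith [ (by positivity : (0:ℝ) ≤ E z)]
      have : (1 - M z) ^ 2 = 0 := by
        have := sq_nonneg (1 - M z); have := sq_nonneg (deriv M z)
        simp only [hE] at hEz
        nlinarith
      have := pow_eq_zero_iff (n := 2) (by norm_num) |>.mp this
      linarith
    have htends1 : Tendsto M atTop (𝓝 (1 : ℝ)) := by
      refine tendsto_const_nhds.congr' ?_
      filter_upwards [eventually_ge_atTop z₀] with z hz
      exact (hMeq1 z hz).symm
    have : (0 : ℝ) = 1 := tendsto_nhds_unique h.limM_top htends1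
    norm_num at this
  refine fun z => ⟨hMlt z, ?_⟩
  -- Part 2 : I < b σ everywhere
  set c : ℝ := bP α₂ β₁ β₂ * sigmaP α₂ β₁ β₂ with hc
  have hσpos : 0 < sigmaP α₂ β₁ β₂ := div_pos hα₂ (mul_pos hβ₁ hβ₂)
  have hdenpos : 0 < β₂ * sigmaP α₂ β₁ β₂ + α₂ := by positivity
  have hbpos : 0 < bP α₂ β₁ β₂ := div_pos hβ₂ hdenpos
  have hapos : 0 < aP α₂ β₁ β₂ := by unfold aP; positivity
  have hcpos : 0 < c := mul_pos hbpos hσpos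
  by_contra hcon
  push_neg at hcon
  -- find a global maximum point z* with c ≤ I z*
  obtain ⟨zs, hmaxI, hcle⟩ : ∃ zs, (∀ y, I y ≤ I zs) ∧ c ≤ I zs := by
    by_cases hbig : ∃ z₃, c < I z₃
    · obtain ⟨z₃, hz₃⟩ := hbig
      set mid : ℝ := (c + I z₃) / 2 with hmid
      have hmid1 : c < mid := by rw [hmid]; linarith
      have hmid2 : mid < I z₃ := by rw [hmid]; linarith
      have htop : ∀ᶠ z in atTop, I z < mid :=
        h.limI_top.eventually_lt_const (by linarith)
      have hbot : ∀ᶠ z in atBot, I z < mid :=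
        h.limI_bot.eventually_lt_const hmid1
      obtain ⟨R₁, hR₁⟩ := eventually_atTop.mp htop
      obtain ⟨R₂, hR₂⟩ := eventually_atBot.mp hbot
      set a : ℝ := min R₂ z₃ with ha
      set b : ℝ := max R₁ z₃ with hb
      have hz₃mem : z₃ ∈ Set.Icc a b := ⟨min_le_right _ _, le_max_right _ _⟩
      obtain ⟨zs, hzsmem, hzsmax⟩ :=
        (isCompact_Icc (a := a) (b := b)).exists_isMaxOn ⟨z₃, hz₃mem⟩
          (h.smoothI.continuous.continuousOn)
      have hIz₃ : I z₃ ≤ I zs := hzsmax hz₃mem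
      refine ⟨zs, fun y => ?_, le_trans hz₃.le hIz₃⟩
      by_cases hy : y ∈ Set.Icc a b
      · exact hzsmax hy
      · have : I y < mid := by
          rcases not_and_or.mp (fun hh => hy ⟨hh.1, hh.2⟩) with hlt | hgt
          · exact hR₂ y (le_trans (not_le.mp hlt).le (min_le_left _ _))
          · exact hR₁ y (le_trans (le_max_left _ _) (not_le.mp hgt).le)
        linarith
    · push_neg at hbig
      have heq : I z = c := le_antisymm (hbig z) hcon
      exact ⟨z, fun y => heq ▸ hbig y, heq ▸ le_rfl⟩
  have hlocI : IsLocalMax I zs := Filter.Eventually.of_forall hmaxI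
  have hI'0 : deriv I zs = 0 := hlocI.deriv_eq_zero
  have hI'' : deriv (deriv I) zs ≤ 0 := second_deriv_nonpos_of_max h.smoothI hmaxI
  have hode := h.odeI zs
  rw [hI'0] at hode
  have hfnonneg : 0 ≤ fP α₂ β₁ β₂ (M zs) (I zs) := by
    nlinarith [mul_nonneg (mul_nonneg hδ.le hD.le) (neg_nonneg.mpr hI'')]
  have hIpos : 0 < I zs := lt_of_lt_of_le hcpos hcle
  have hden2 : 0 < α₂ * I zs + β₂ * (1 - M zs) := by
    have h1 : 0 < α₂ * I zs := mul_pos hα₂ hIpos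
    have h2 : 0 ≤ β₂ * (1 - M zs) := mul_nonneg hβ₂.le (by linarith [hMlt zs])
    linarith
  have hfac : bP α₂ β₁ β₂ * (sigmaP α₂ β₁ β₂ - 1) + bP α₂ β₁ β₂ * M zs - I zs < 0 := by
    have h1 : 0 < bP α₂ β₁ β₂ * (1 - M zs) := mul_pos hbpos (by linarith [hMlt zs])
    have : bP α₂ β₁ β₂ * (sigmaP α₂ β₁ β₂ - 1) + bP α₂ β₁ β₂ * M zs - I zs
        = c - bP α₂ β₁ β₂ * (1 - M zs) - I zs := by rw [hc]; ring
    rw [this]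
    linarith
  have hfneg : fP α₂ β₁ β₂ (M zs) (I zs) < 0 := by
    unfold fP
    exact div_neg_of_neg_of_pos (mul_neg_of_pos_of_neg (mul_pos hapos hIpos) hfac) hden2
  linarith
end

section
/- (Proposition 4.3) Let 0 < δ ≤ σ ≤ 1 and let (M_T, I_T) be an FPTW with speed v > 0. Then both M_T and I_T are strictly monotone decreasing on ℝ, i.e. M_T'(z) < 0 and I_T'(z) < 0 for all z ∈ ℝ. -/
open Real Set Filter Topology


section FPTWproofAux

lemma vanish_of_second_order_bound {u : ℝ → ℝ} {a c K : ℝ}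
    (hu : Differentiable ℝ u) (hu' : Differentiable ℝ (deriv u))
    (hbound : ∀ t ∈ Set.Icc a c, |deriv (deriv u) t| ≤ K * max |u t| |deriv u t|)
    (ha : u a = 0) (ha' : deriv u a = 0) :
    ∀ t ∈ Set.Icc a c, u t = 0 := by
  set K' := max K 1 with hK'def
  have hK1 : (1:ℝ) ≤ K' := le_max_right _ _
  set g : ℝ → ℝ × ℝ := fun t => (u t, deriv u t) with hg
  have hgd : ∀ t, HasDerivAt g (deriv u t, deriv (deriv u) t) t := fun t =>
    ((hu t).hasDerivAt).prodMk ((hu' t).hasDerivAt)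
  have key := norm_le_gronwallBound_of_norm_deriv_right_le (f := g)
    (f' := fun t => (deriv u t, deriv (deriv u) t)) (δ := 0) (K := K') (ε := 0) (a := a) (b := c)
    (Continuous.continuousOn (by have := hu.continuous; have := hu'.continuous; fun_prop))
    (fun x _ => (hgd x).hasDerivWithinAt)
    (by simp [hg, ha, ha', Prod.norm_def])
    ?_
  · intro t ht
    have h1 := key t ht
    rw [gronwallBound_ε0_δ0] at h1
    have h2 : ‖g t‖ = 0 := le_antisymm h1 (norm_nonneg _)
    have := norm_eq_zero.mp h2
    simpa [hg, Prod.ext_iff] using congrArg Prod.fst this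
  · intro x hx
    have hx' : x ∈ Set.Icc a c := Set.mem_of_mem_of_subset hx Set.Ico_subset_Icc_self
    have hb := hbound x hx'
    have hnn : (0:ℝ) ≤ max |u x| |deriv u x| := le_max_of_le_left (abs_nonneg _)
    have hKK : K * max |u x| |deriv u x| ≤ K' * max |u x| |deriv u x| :=
      mul_le_mul_of_nonneg_right (le_max_left _ _) hnn
    have h1 : |deriv u x| ≤ K' * max |u x| |deriv u x| := by
      calc |deriv u x| ≤ max |u x| |deriv u x| := le_max_right _ _
        _ = 1 * max |u x| |deriv u x| := (one_mul _).symm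
        _ ≤ K' * max |u x| |deriv u x| := mul_le_mul_of_nonneg_right hK1 hnn
    have hnorm : ‖g x‖ = max |u x| |deriv u x| := by
      simp [hg, Prod.norm_def, Real.norm_eq_abs]
    rw [Prod.norm_def]
    simp only [Real.norm_eq_abs, add_zero]
    rw [hnorm]
    exact max_le h1 (le_trans hb hKK)

lemma hasDerivAt_exp_weight (μ : ℝ) {g : ℝ → ℝ} (hg : Differentiable ℝ g) (z : ℝ) :
    HasDerivAt (fun z => Real.exp (μ * z) * g z)
      (Real.exp (μ * z) * (deriv g z + μ * g z)) z := by
  have h1 : HasDerivAt (fun z => Real.exp (μ * z)) (Real.exp (μ * z) * μ) z := by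
    simpa using ((hasDerivAt_id z).const_mul μ).exp
  have := h1.fun_mul (hg z).hasDerivAt
  exact this.congr_deriv (by ring)

lemma Mder_nonpos {v : ℝ} (hv : 0 < v) {M I : ℝ → ℝ}
    (hM : Differentiable ℝ M) (hM' : Differentiable ℝ (deriv M))
    (hMr : ∀ z, M z ∈ Set.Icc (0:ℝ) 1) (hIr : ∀ z, 0 ≤ I z)
    (ode : ∀ z, deriv (deriv M) z + v * deriv M z + I z * M z * (1 - M z) = 0) :
    ∀ z, deriv M z ≤ 0 := by
  set h : ℝ → ℝ := fun z => Real.exp (v * z) * deriv M z with hhdef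
  have hder : ∀ z, HasDerivAt h (Real.exp (v * z) * (deriv (deriv M) z + v * deriv M z)) z :=
    fun z => hasDerivAt_exp_weight v hM' z
  have hanti : Antitone h := by
    apply antitone_of_deriv_nonpos
    · exact fun z => ((hder z).differentiableAt)
    · intro z
      rw [(hder z).deriv]
      have h1 : deriv (deriv M) z + v * deriv M z = -(I z * M z * (1 - M z)) := by
        linarith [ode z]
      rw [h1]
      have h2 : 0 ≤ I z * M z * (1 - M z) :=
        mul_nonneg (mul_nonneg (hIr z) (hMr z).1) (by linarith [(hMr z).2])
      have := Real.exp_pos (v * z)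
      nlinarith
  by_contra hcon
  push_neg at hcon
  obtain ⟨z₀, hz₀⟩ := hcon
  set c : ℝ := Real.exp (v * z₀) * deriv M z₀ with hcdef
  have hc : 0 < c := mul_pos (Real.exp_pos _) hz₀
  set G : ℝ → ℝ := fun z => M z + (c / v) * Real.exp (-(v * z)) with hGdef
  have hGder : ∀ z, HasDerivAt G (deriv M z - c * Real.exp (-(v * z))) z := by
    intro z
    have h1 : HasDerivAt (fun z => Real.exp (-(v * z))) (Real.exp (-(v * z)) * (-v)) z := by
      simpa using (((hasDerivAt_id z).const_mul v).neg).exp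
    have := ((hM z).hasDerivAt).fun_add ((h1.const_mul (c / v)))
    exact this.congr_deriv (by field_simp; ring)
  have hGmono : MonotoneOn G (Set.Iic z₀) := by
    apply monotoneOn_of_deriv_nonneg (convex_Iic z₀)
    · exact Continuous.continuousOn (by have := hM.continuous; fun_prop)
    · intro z _
      exact ((hGder z).differentiableAt).differentiableWithinAt
    · intro z hz
      rw [interior_Iic] at hz
      rw [(hGder z).deriv]
      have hhz : c ≤ h z := hanti (le_of_lt hz)
      have hexp : (0:ℝ) < Real.exp (v * z) := Real.exp_pos _
      have hEi : Real.exp (v * z) * (Real.exp (v * z))⁻¹ = 1 := mul_inv_cancel₀ (ne_of_gt hexp)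
      have hEinn : (0:ℝ) ≤ (Real.exp (v * z))⁻¹ := inv_nonneg.mpr hexp.le
      have hhz' : c ≤ Real.exp (v * z) * deriv M z := hhz
      have hls : c * Real.exp (-(v * z)) ≤ deriv M z := by
        rw [Real.exp_neg]
        nlinarith
      linarith
  -- contradiction via unboundedness
  have hG0 : 0 < G z₀ := by
    have h1 : (0:ℝ) ≤ M z₀ := (hMr z₀).1
    have h2 : 0 < c / v * Real.exp (-(v * z₀)) := mul_pos (div_pos hc hv) (Real.exp_pos _)
    simp only [hGdef]
    linarith
  set X : ℝ := v * (G z₀ + 1) / c with hXdef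
  have hX : 0 < X := div_pos (mul_pos hv (by linarith)) hc
  set z₁ : ℝ := min z₀ (-(Real.log X) / v) with hz₁def
  have hz₁le : z₁ ≤ z₀ := min_le_left _ _
  have hlog : Real.log X ≤ -(v * z₁) := by
    have h1 : z₁ ≤ -(Real.log X) / v := min_le_right _ _
    have h2 : v * z₁ ≤ v * (-(Real.log X) / v) := mul_le_mul_of_nonneg_left h1 hv.le
    have h3 : v * (-(Real.log X) / v) = -(Real.log X) := by field_simp
    linarith
  have hexpX : X ≤ Real.exp (-(v * z₁)) := by
    calc X = Real.exp (Real.log X) := (Real.exp_log hX).symm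
      _ ≤ Real.exp (-(v * z₁)) := Real.exp_le_exp.mpr hlog
  have hbig : G z₀ + 1 ≤ c / v * Real.exp (-(v * z₁)) := by
    have h1 : c / v * X ≤ c / v * Real.exp (-(v * z₁)) :=
      mul_le_mul_of_nonneg_left hexpX (div_pos hc hv).le
    have h2 : c / v * X = G z₀ + 1 := by
      rw [hXdef]
      field_simp
    linarith
  have hGle : G z₁ ≤ G z₀ := hGmono (Set.mem_Iic.mpr hz₁le) (Set.mem_Iic.mpr le_rfl) hz₁le
  have hM0 : (0:ℝ) ≤ M z₁ := (hMr z₁).1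
  have : M z₁ + (G z₀ + 1) ≤ G z₀ := by
    calc M z₁ + (G z₀ + 1) ≤ M z₁ + c / v * Real.exp (-(v * z₁)) := by linarith
      _ = G z₁ := rfl
      _ ≤ G z₀ := hGle
  linarith

lemma Mder_neg {v : ℝ} (hv : 0 < v) {M I : ℝ → ℝ}
    (hM : Differentiable ℝ M) (hM' : Differentiable ℝ (deriv M))
    (hMr : ∀ z, M z ∈ Set.Icc (0:ℝ) 1) (hIr : ∀ z, I z ∈ Set.Icc (0:ℝ) 1)
    (ode : ∀ z, deriv (deriv M) z + v * deriv M z + I z * M z * (1 - M z) = 0)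
    (limbot : Filter.Tendsto M Filter.atBot (nhds 1))
    (limtop : Filter.Tendsto M Filter.atTop (nhds 0))
    (hle : ∀ z, deriv M z ≤ 0) :
    ∀ z, deriv M z < 0 := by
  intro z₀
  by_contra hcon
  have hz₀ : deriv M z₀ = 0 := le_antisymm (hle z₀) (not_lt.mp hcon)
  -- h is antitone
  set h : ℝ → ℝ := fun z => Real.exp (v * z) * deriv M z with hhdef
  have hder : ∀ z, HasDerivAt h (Real.exp (v * z) * (deriv (deriv M) z + v * deriv M z)) z := by
    intro z
    have h1 : HasDerivAt (fun z => Real.exp (v * z)) (Real.exp (v * z) * v) z := by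
      simpa using ((hasDerivAt_id z).const_mul v).exp
    have := h1.fun_mul ((hM' z).hasDerivAt)
    exact this.congr_deriv (by ring)
  have hanti : Antitone h := by
    apply antitone_of_deriv_nonpos (fun z => (hder z).differentiableAt)
    intro z
    rw [(hder z).deriv]
    have h1 : deriv (deriv M) z + v * deriv M z = -(I z * M z * (1 - M z)) := by
      linarith [ode z]
    have h2 : 0 ≤ I z * M z * (1 - M z) :=
      mul_nonneg (mul_nonneg (hIr z).1 (hMr z).1) (by linarith [(hMr z).2])
    have := (Real.exp_pos (v * z)).le
    rw [h1]
    nlinarith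
  -- deriv M = 0 on Iic z₀
  have hder0 : ∀ y ≤ z₀, deriv M y = 0 := by
    intro y hy
    have h1 : h z₀ ≤ h y := hanti hy
    have h2 : h z₀ = 0 := by simp [hhdef, hz₀]
    have h3 : h y ≤ 0 := by
      have := hle y
      have := (Real.exp_pos (v * y)).le
      simp only [hhdef]
      exact mul_nonpos_of_nonneg_of_nonpos (Real.exp_pos (v*y)).le (hle y)
    have h4 : h y = 0 := le_antisymm h3 (h2 ▸ h1)
    have h5 : Real.exp (v * y) ≠ 0 := (Real.exp_pos _).ne'
    have := mul_eq_zero.mp h4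
    tauto
  -- M constant to the left, hence M z₀ = 1
  have hconst : ∀ y ≤ z₀, M y = M z₀ := by
    intro y hy
    have := constant_of_has_deriv_right_zero (f := M) (a := y) (b := z₀)
      (hM.continuous.continuousOn)
      (fun x hx => by
        have : deriv M x = 0 := hder0 x (le_of_lt hx.2)
        simpa [this] using ((hM x).hasDerivAt.hasDerivWithinAt))
    exact (this z₀ (Set.right_mem_Icc.mpr hy)).symm ▸ rfl
  have hM1 : M z₀ = 1 := by
    have hev : M =ᶠ[Filter.atBot] (fun _ => M z₀) := by
      filter_upwards [Filter.Iic_mem_atBot z₀] with y hy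
      exact hconst y hy
    have h2 : Filter.Tendsto M Filter.atBot (nhds (M z₀)) :=
      Filter.Tendsto.congr' hev.symm tendsto_const_nhds
    exact (tendsto_nhds_unique limbot h2).symm
  -- Gronwall forward: M ≡ 1 on [z₀, ∞)
  set u : ℝ → ℝ := fun z => 1 - M z with hudef
  have hu : Differentiable ℝ u := (differentiable_const 1).sub hM
  have hu'e : deriv u = fun z => -(deriv M z) := by
    funext z
    simp [hudef, deriv_const_sub]
  have hu' : Differentiable ℝ (deriv u) := by
    rw [hu'e]; exact hM'.neg
  have hu''e : ∀ z, deriv (deriv u) z = -(deriv (deriv M) z) := by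
    intro z
    rw [hu'e]
    exact deriv.neg
  have hall : ∀ z, z₀ ≤ z → M z = 1 := by
    intro z hz
    have key := vanish_of_second_order_bound (u := u) (a := z₀) (c := z) (K := v + 1)
      hu hu' ?_ (by simp [hudef, hM1]) (by rw [hu'e]; simp [hz₀])
    · have := key z (Set.right_mem_Icc.mpr hz)
      simp only [hudef] at this
      linarith
    · intro t _
      have hode := ode t
      have h1 : deriv (deriv M) t = -(v * deriv M t) - I t * M t * (1 - M t) := by linarith
      have h2 : |I t * M t * (1 - M t)| ≤ |1 - M t| := by
        rw [abs_mul]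
        have h3 : |I t * M t| ≤ 1 := by
          rw [abs_mul]
          have := (hIr t).1; have := (hIr t).2; have := (hMr t).1; have := (hMr t).2
          rw [abs_of_nonneg (hIr t).1, abs_of_nonneg (hMr t).1]
          nlinarith
        nlinarith [abs_nonneg (1 - M t), abs_nonneg (I t * M t)]
      have h4 : |deriv (deriv u) t| ≤ v * |deriv u t| + |u t| := by
        rw [hu''e, hu'e, abs_neg, h1, hudef]
        simp only [abs_neg]
        calc |-(v * deriv M t) - I t * M t * (1 - M t)|
            ≤ |(v * deriv M t)| + |I t * M t * (1 - M t)| := by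
              rw [← abs_neg (v * deriv M t)] ; exact abs_sub _ _
          _ ≤ v * |deriv M t| + |1 - M t| := by
              rw [abs_mul, abs_of_pos hv]
              linarith
      have h5 : |deriv u t| ≤ max |u t| |deriv u t| := le_max_right _ _
      have h6 : |u t| ≤ max |u t| |deriv u t| := le_max_left _ _
      calc |deriv (deriv u) t| ≤ v * |deriv u t| + |u t| := h4
        _ ≤ v * max |u t| |deriv u t| + max |u t| |deriv u t| := by
            have := mul_le_mul_of_nonneg_left h5 hv.le
            linarith
        _ = (v + 1) * max |u t| |deriv u t| := by ring
  have hev2 : M =ᶠ[Filter.atTop] (fun _ => (1:ℝ)) := by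
    filter_upwards [Filter.Ici_mem_atTop z₀] with y hy
    exact hall y hy
  have h7 : Filter.Tendsto M Filter.atTop (nhds 1) :=
    Filter.Tendsto.congr' hev2.symm tendsto_const_nhds
  have : (0:ℝ) = 1 := tendsto_nhds_unique limtop h7
  norm_num at this

lemma k_hasderiv {δ D v : ℝ} (hδ : 0 < δ) (hD : 0 < D) {I F : ℝ → ℝ}
    (hI' : Differentiable ℝ (deriv I))
    (odeI : ∀ z, δ * (D * deriv (deriv I) z + v * deriv I z) + F z = 0) (z : ℝ) :
    HasDerivAt (fun z => Real.exp (v / D * z) * deriv I z)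
      (Real.exp (v / D * z) * (-(F z) / (δ * D))) z := by
  have h1 : HasDerivAt (fun z => Real.exp (v / D * z)) (Real.exp (v / D * z) * (v / D)) z := by
    simpa using ((hasDerivAt_id z).const_mul (v / D)).exp
  have h2 := h1.fun_mul ((hI' z).hasDerivAt)
  refine h2.congr_deriv ?_
  have h3 := odeI z
  have h4 : deriv (deriv I) z + v / D * deriv I z = -(F z) / (δ * D) := by
    field_simp
    nlinarith [h3]
  have : Real.exp (v / D * z) * (-(F z) / (δ * D))
      = Real.exp (v / D * z) * (deriv (deriv I) z + v / D * deriv I z) := by rw [h4]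
  rw [this]; ring

lemma localmax_F_nonneg {δ D v : ℝ} (hδ : 0 < δ) (hD : 0 < D) {I F : ℝ → ℝ}
    (hI : Differentiable ℝ I) (hI' : Differentiable ℝ (deriv I))
    (hFcont : Continuous F)
    (odeI : ∀ z, δ * (D * deriv (deriv I) z + v * deriv I z) + F z = 0)
    {z₁ : ℝ} (hmax : IsLocalMax I z₁) : 0 ≤ F z₁ := by
  by_contra hcon
  push_neg at hcon
  set k : ℝ → ℝ := fun z => Real.exp (v / D * z) * deriv I z with hkdef
  have hkc : Continuous k := by have := hI'.continuous; fun_prop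
  have hI'z : deriv I z₁ = 0 := hmax.deriv_eq_zero
  have hnear : ∀ᶠ z in nhds z₁, F z < 0 ∧ I z ≤ I z₁ := by
    have h1 : ∀ᶠ z in nhds z₁, F z < 0 :=
      hFcont.continuousAt.preimage_mem_nhds (Iio_mem_nhds hcon)
    exact h1.and hmax
  obtain ⟨ε, hε, hball⟩ := Metric.eventually_nhds_iff_ball.mp hnear
  set w : ℝ := z₁ + ε / 2 with hwdef
  have hw1 : z₁ < w := by simp [hwdef]; linarith
  have hmem : ∀ x ∈ Set.Icc z₁ w, x ∈ Metric.ball z₁ ε := by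
    intro x hx
    have h1 := hx.1
    have h2 := hx.2
    rw [hwdef] at *
    rw [Metric.mem_ball, Real.dist_eq, abs_lt]
    constructor <;> linarith
  have hkmono : StrictMonoOn k (Set.Icc z₁ w) := by
    apply strictMonoOn_of_deriv_pos (convex_Icc _ _) hkc.continuousOn
    intro x hx
    rw [interior_Icc] at hx
    have hxball := hmem x ⟨hx.1.le, hx.2.le⟩
    have hF := (hball x hxball).1
    rw [(k_hasderiv hδ hD hI' odeI x).deriv]
    have : 0 < -(F x) / (δ * D) := div_pos (by linarith) (mul_pos hδ hD)
    exact mul_pos (Real.exp_pos _) this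
  have hkpos : ∀ x ∈ Set.Ioo z₁ w, 0 < deriv I x := by
    intro x hx
    have h1 : k z₁ < k x := hkmono (Set.left_mem_Icc.mpr hw1.le) ⟨hx.1.le, hx.2.le⟩ hx.1
    have h2 : k z₁ = 0 := by simp [hkdef, hI'z]
    rw [h2, hkdef] at h1
    have := Real.exp_pos (v / D * x)
    nlinarith
  have hImono : StrictMonoOn I (Set.Icc z₁ w) := by
    apply strictMonoOn_of_deriv_pos (convex_Icc _ _) hI.continuous.continuousOn
    intro x hx
    rw [interior_Icc] at hx
    exact hkpos x hx
  have h1 : I z₁ < I w := hImono (Set.left_mem_Icc.mpr hw1.le) (Set.right_mem_Icc.mpr hw1.le) hw1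
  have h2 : I w ≤ I z₁ := (hball w (hmem w (Set.right_mem_Icc.mpr hw1.le))).2
  linarith

lemma localmin_F_nonpos {δ D v : ℝ} (hδ : 0 < δ) (hD : 0 < D) {I F : ℝ → ℝ}
    (hI : Differentiable ℝ I) (hI' : Differentiable ℝ (deriv I))
    (hFcont : Continuous F)
    (odeI : ∀ z, δ * (D * deriv (deriv I) z + v * deriv I z) + F z = 0)
    {z₂ : ℝ} (hmin : IsLocalMin I z₂) : F z₂ ≤ 0 := by
  by_contra hcon
  push_neg at hcon
  set k : ℝ → ℝ := fun z => Real.exp (v / D * z) * deriv I z with hkdef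
  have hkc : Continuous k := by have := hI'.continuous; fun_prop
  have hI'z : deriv I z₂ = 0 := hmin.deriv_eq_zero
  have hnear : ∀ᶠ z in nhds z₂, 0 < F z ∧ I z₂ ≤ I z := by
    have h1 : ∀ᶠ z in nhds z₂, 0 < F z :=
      hFcont.continuousAt.preimage_mem_nhds (Ioi_mem_nhds hcon)
    exact h1.and hmin
  obtain ⟨ε, hε, hball⟩ := Metric.eventually_nhds_iff_ball.mp hnear
  set w : ℝ := z₂ - ε / 2 with hwdef
  have hw1 : w < z₂ := by simp [hwdef]; linarith
  have hmem : ∀ x ∈ Set.Icc w z₂, x ∈ Metric.ball z₂ ε := by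
    intro x hx
    have h1 := hx.1
    have h2 := hx.2
    rw [hwdef] at *
    rw [Metric.mem_ball, Real.dist_eq, abs_lt]
    constructor <;> linarith
  have hkanti : StrictAntiOn k (Set.Icc w z₂) := by
    apply strictAntiOn_of_deriv_neg (convex_Icc _ _) hkc.continuousOn
    intro x hx
    rw [interior_Icc] at hx
    have hxball := hmem x ⟨hx.1.le, hx.2.le⟩
    have hF := (hball x hxball).1
    rw [(k_hasderiv hδ hD hI' odeI x).deriv]
    have : -(F x) / (δ * D) < 0 := div_neg_of_neg_of_pos (by linarith) (mul_pos hδ hD)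
    exact mul_neg_of_pos_of_neg (Real.exp_pos _) this
  have hkpos : ∀ x ∈ Set.Ioo w z₂, 0 < deriv I x := by
    intro x hx
    have h1 : k z₂ < k x := hkanti ⟨hx.1.le, hx.2.le⟩ (Set.right_mem_Icc.mpr hw1.le) hx.2
    have h2 : k z₂ = 0 := by simp [hkdef, hI'z]
    rw [h2, hkdef] at h1
    have := Real.exp_pos (v / D * x)
    nlinarith
  have hImono : StrictMonoOn I (Set.Icc w z₂) := by
    apply strictMonoOn_of_deriv_pos (convex_Icc _ _) hI.continuous.continuousOn
    intro x hx
    rw [interior_Icc] at hx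
    exact hkpos x hx
  have h1 : I w < I z₂ := hImono (Set.left_mem_Icc.mpr hw1.le) (Set.right_mem_Icc.mpr hw1.le) hw1
  have h2 : I z₂ ≤ I w := (hball w (hmem w (Set.left_mem_Icc.mpr hw1.le))).2
  linarith

lemma I_zero_backward {α₂ β₁ β₂ δ D v : ℝ}
    (hα₂ : 0 < α₂) (hβ₁ : 0 < β₁) (hβ₂ : 0 < β₂) (hD : 0 < D) (hδ : 0 < δ)
    (hσ : sigmaP α₂ β₁ β₂ ≤ 1)
    {M I : ℝ → ℝ}
    (hI : Differentiable ℝ I) (hI' : Differentiable ℝ (deriv I))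
    (hMr : ∀ z, M z ∈ Set.Icc (0:ℝ) 1) (hIr : ∀ z, I z ∈ Set.Icc (0:ℝ) 1)
    (hMc : Continuous M)
    (hMlt1 : ∀ z, M z < 1)
    (odeI : ∀ z, δ * (D * deriv (deriv I) z + v * deriv I z) + fP α₂ β₁ β₂ (M z) (I z) = 0)
    (limIbot : Filter.Tendsto I Filter.atBot (nhds (bP α₂ β₁ β₂ * sigmaP α₂ β₁ β₂)))
    {z₂ : ℝ} (h0 : I z₂ = 0) (h0' : deriv I z₂ = 0) : False := by
  have hσ0 : 0 < sigmaP α₂ β₁ β₂ := div_pos hα₂ (mul_pos hβ₁ hβ₂)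
  have hd1 : 0 < β₂ * sigmaP α₂ β₁ β₂ + α₂ := by positivity
  have ha0 : 0 < aP α₂ β₁ β₂ := mul_pos hβ₁ hd1
  have hb0 : 0 < bP α₂ β₁ β₂ := div_pos hβ₂ hd1
  have hbσ : 0 < bP α₂ β₁ β₂ * sigmaP α₂ β₁ β₂ := mul_pos hb0 hσ0
  set σ := sigmaP α₂ β₁ β₂
  set aa := aP α₂ β₁ β₂
  set bb := bP α₂ β₁ β₂
  set den : ℝ → ℝ := fun z => α₂ * I z + β₂ * (1 - M z) with hdendef
  have hden : ∀ z, 0 < den z := by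
    intro z
    have h1 : 0 ≤ α₂ * I z := mul_nonneg hα₂.le (hIr z).1
    have h2 : 0 < β₂ * (1 - M z) := mul_pos hβ₂ (by linarith [hMlt1 z])
    simp only [hdendef]; linarith
  have hdenc : Continuous den := by
    simp only [hdendef]; have := hI.continuous; fun_prop
  -- it suffices to show I vanishes on Iic z₂
  have hkey : ∀ y, y ≤ z₂ → I y = 0 := by
    intro y hy
    -- minimum of den on [y, z₂]
    obtain ⟨d0, hd00, hd0le⟩ : ∃ d0 : ℝ, 0 < d0 ∧ ∀ z ∈ Set.Icc y z₂, d0 ≤ den z := by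
      obtain ⟨zm, hzm, hminon⟩ := (isCompact_Icc (a := y) (b := z₂)).exists_isMinOn
        (Set.nonempty_Icc.mpr hy) hdenc.continuousOn
      exact ⟨den zm, hden zm, fun z hz => hminon hz⟩
    obtain ⟨L, hL0, hFb⟩ : ∃ L : ℝ, 0 < L ∧
        ∀ z ∈ Set.Icc y z₂, |fP α₂ β₁ β₂ (M z) (I z)| ≤ L * I z := by
      refine ⟨aa * (2 * bb + 1) / d0, div_pos (mul_pos ha0 (by linarith)) hd00, ?_⟩
      intro z hz
      have hE : |bb * (σ - 1) + bb * M z - I z| ≤ 2 * bb + 1 := by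
        have h1 := (hMr z).1; have h2 := (hMr z).2
        have h3 := (hIr z).1; have h4 := (hIr z).2
        rw [abs_le]
        constructor <;> nlinarith
      have hFeq : fP α₂ β₁ β₂ (M z) (I z)
          = aa * I z * (bb * (σ - 1) + bb * M z - I z) / den z := rfl
      rw [hFeq, abs_div, abs_of_pos (hden z), abs_mul, abs_mul,
        abs_of_pos ha0, abs_of_nonneg (hIr z).1]
      rw [div_le_iff₀ (hden z)]
      have h5 : aa * I z * |bb * (σ - 1) + bb * M z - I z| ≤ aa * I z * (2 * bb + 1) :=
        mul_le_mul_of_nonneg_left hE (mul_nonneg ha0.le (hIr z).1)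
      have h6 : aa * I z * (2 * bb + 1) = (aa * (2 * bb + 1) / d0) * I z * d0 := by
        field_simp
      have hprod : 0 ≤ (aa * (2 * bb + 1) / d0) * I z * (den z - d0) :=
        mul_nonneg (mul_nonneg (div_pos (mul_pos ha0 (by linarith)) hd00).le (hIr z).1)
          (sub_nonneg.mpr (hd0le z hz))
      nlinarith [h5, h6, hprod]
    -- reversed function
    set u : ℝ → ℝ := fun t => I (z₂ - t) with hudef
    have hinner : ∀ t : ℝ, HasDerivAt (fun t : ℝ => z₂ - t) (-1) t := by
      intro t
      simpa using (hasDerivAt_id t).const_sub z₂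
    have hucomp : ∀ t, HasDerivAt u (-(deriv I (z₂ - t))) t := by
      intro t
      have := ((hI (z₂ - t)).hasDerivAt).comp t (hinner t)
      simpa [hudef, mul_comm, Function.comp_def] using this
    have hu : Differentiable ℝ u := fun t => (hucomp t).differentiableAt
    have hu'e : deriv u = fun t => -(deriv I (z₂ - t)) := funext fun t => (hucomp t).deriv
    have hu'comp : ∀ t, HasDerivAt (fun t => -(deriv I (z₂ - t))) (deriv (deriv I) (z₂ - t)) t := by
      intro t
      have := (((hI' (z₂ - t)).hasDerivAt).comp t (hinner t)).fun_neg
      simpa [mul_comm, Function.comp_def] using this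
    have hu' : Differentiable ℝ (deriv u) := by
      rw [hu'e]; exact fun t => (hu'comp t).differentiableAt
    have hu''e : ∀ t, deriv (deriv u) t = deriv (deriv I) (z₂ - t) := by
      intro t; rw [hu'e]; exact (hu'comp t).deriv
    set K : ℝ := (v * 1 + L / δ) / D + |v| / D with hKdef
    have key := vanish_of_second_order_bound (u := u) (a := 0) (c := z₂ - y)
      (K := (|v| + L / δ) / D) hu hu' ?_ (by simp [hudef, h0]) (by rw [hu'e]; simp [h0'])
    · have := key (z₂ - y) (Set.mem_Icc.mpr ⟨by linarith, le_rfl⟩)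
      simp only [hudef] at this
      rw [show z₂ - (z₂ - y) = y by ring] at this
      exact this
    · intro t ht
      have hzmem : z₂ - t ∈ Set.Icc y z₂ := by
        constructor <;> [linarith [ht.2]; linarith [ht.1]]
      have hF := hFb (z₂ - t) hzmem
      have hode := odeI (z₂ - t)
      have hI''e : deriv (deriv I) (z₂ - t)
          = (-(fP α₂ β₁ β₂ (M (z₂ - t)) (I (z₂ - t))) / δ - v * deriv I (z₂ - t)) / D := by
        field_simp
        linarith
      rw [hu''e, hu'e, hudef]
      simp only [abs_neg]
      rw [hI''e]
      have h8 : |(-(fP α₂ β₁ β₂ (M (z₂ - t)) (I (z₂ - t))) / δ - v * deriv I (z₂ - t)) / D|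
          ≤ (|fP α₂ β₁ β₂ (M (z₂ - t)) (I (z₂ - t))| / δ + |v| * |deriv I (z₂ - t)|) / D := by
        rw [abs_div, abs_of_pos hD]
        apply div_le_div_of_nonneg_right _ hD.le
        calc |(-(fP α₂ β₁ β₂ (M (z₂ - t)) (I (z₂ - t))) / δ - v * deriv I (z₂ - t))|
            ≤ |(-(fP α₂ β₁ β₂ (M (z₂ - t)) (I (z₂ - t))) / δ)| + |v * deriv I (z₂ - t)| :=
              abs_sub _ _
          _ = |fP α₂ β₁ β₂ (M (z₂ - t)) (I (z₂ - t))| / δ + |v| * |deriv I (z₂ - t)| := by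
              rw [abs_div, abs_neg, abs_of_pos hδ, abs_mul]
      have h9 : |fP α₂ β₁ β₂ (M (z₂ - t)) (I (z₂ - t))| / δ ≤ (L / δ) * |I (z₂ - t)| := by
        rw [abs_of_nonneg (hIr (z₂ - t)).1]
        rw [div_le_iff₀ hδ]
        have : L / δ * I (z₂ - t) * δ = L * I (z₂ - t) := by field_simp
        rw [this]
        exact hF
      have hmx1 : |I (z₂ - t)| ≤ max |I (z₂ - t)| |deriv I (z₂ - t)| := le_max_left _ _
      have hmx2 : |deriv I (z₂ - t)| ≤ max |I (z₂ - t)| |deriv I (z₂ - t)| := le_max_right _ _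
      have hmxnn : 0 ≤ max |I (z₂ - t)| |deriv I (z₂ - t)| := le_trans (abs_nonneg _) hmx1
      calc |(-(fP α₂ β₁ β₂ (M (z₂ - t)) (I (z₂ - t))) / δ - v * deriv I (z₂ - t)) / D|
          ≤ (|fP α₂ β₁ β₂ (M (z₂ - t)) (I (z₂ - t))| / δ + |v| * |deriv I (z₂ - t)|) / D := h8
        _ ≤ ((L / δ) * max |I (z₂ - t)| |deriv I (z₂ - t)|
              + |v| * max |I (z₂ - t)| |deriv I (z₂ - t)|) / D := by
            apply div_le_div_of_nonneg_right _ hD.le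
            have h10 : (L/δ) * |I (z₂ - t)| ≤ (L/δ) * max |I (z₂ - t)| |deriv I (z₂ - t)| :=
              mul_le_mul_of_nonneg_left hmx1 (div_pos hL0 hδ).le
            have h11 : |v| * |deriv I (z₂ - t)| ≤ |v| * max |I (z₂ - t)| |deriv I (z₂ - t)| :=
              mul_le_mul_of_nonneg_left hmx2 (abs_nonneg v)
            linarith [le_trans h9 h10]
        _ = (|v| + L / δ) / D * max |I (z₂ - t)| |deriv I (z₂ - t)| := by ring
  -- contradiction with the limit at -∞
  have hev : I =ᶠ[Filter.atBot] (fun _ => (0:ℝ)) := by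
    filter_upwards [Filter.Iic_mem_atBot z₂] with y hy
    exact hkey y hy
  have h7 : Filter.Tendsto I Filter.atBot (nhds 0) :=
    Filter.Tendsto.congr' hev.symm tendsto_const_nhds
  have := tendsto_nhds_unique limIbot h7
  rw [this] at hbσ
  exact lt_irrefl 0 hbσ

end FPTWproofAux

/-- Proposition 4.3: both components of an [FPTW] are strictly monotone decreasing. -/
theorem fptw_strict_decrease (α₂ β₁ β₂ δ D v : ℝ)
    (hα₂ : 0 < α₂) (hβ₁ : 0 < β₁) (hβ₂ : 0 < β₂) (hD : 0 < D)
    (hδ : 0 < δ) (hδσ : δ ≤ sigmaP α₂ β₁ β₂) (hσ : sigmaP α₂ β₁ β₂ ≤ 1)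
    (hv : 0 < v) (M I : ℝ → ℝ) (h : IsFPTW α₂ β₁ β₂ δ D v M I) :
    ∀ z : ℝ, deriv M z < 0 ∧ deriv I z < 0 := by
  classical
  have cd2 : ∀ {f : ℝ → ℝ}, ContDiff ℝ 2 f →
      Differentiable ℝ f ∧ Differentiable ℝ (deriv f) ∧ Continuous (deriv (deriv f)) := by
    intro f hf
    have h2 : ContDiff ℝ (1 + 1) f := by exact hf
    rw [contDiff_succ_iff_deriv] at h2
    exact ⟨h2.1, h2.2.2.differentiable one_ne_zero, h2.2.2.continuous_deriv le_rfl⟩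
  obtain ⟨hM, hM', hM''c⟩ := cd2 h.smoothM
  obtain ⟨hI, hI', hI''c⟩ := cd2 h.smoothI
  have hMle : ∀ z, deriv M z ≤ 0 :=
    Mder_nonpos hv hM hM' h.rangeM (fun z => (h.rangeI z).1) h.odeM
  have hMneg : ∀ z, deriv M z < 0 :=
    Mder_neg hv hM hM' h.rangeM h.rangeI h.odeM h.limM_bot h.limM_top hMle
  have hManti : StrictAnti M := strictAnti_of_deriv_neg hMneg
  have hMlt1 : ∀ z, M z < 1 := fun z =>
    lt_of_lt_of_le (hManti (show z - 1 < z by linarith)) (h.rangeM (z - 1)).2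
  -- basic positivity
  have hσ0 : 0 < sigmaP α₂ β₁ β₂ := div_pos hα₂ (mul_pos hβ₁ hβ₂)
  have hd1 : 0 < β₂ * sigmaP α₂ β₁ β₂ + α₂ := by positivity
  have ha0 : 0 < aP α₂ β₁ β₂ := mul_pos hβ₁ hd1
  have hb0 : 0 < bP α₂ β₁ β₂ := div_pos hβ₂ hd1
  have hden : ∀ z, 0 < α₂ * I z + β₂ * (1 - M z) := by
    intro z
    have h1 : 0 ≤ α₂ * I z := mul_nonneg hα₂.le (h.rangeI z).1
    have h2 : 0 < β₂ * (1 - M z) := mul_pos hβ₂ (by linarith [hMlt1 z])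
    linarith
  have hFeq : ∀ z, fP α₂ β₁ β₂ (M z) (I z)
      = aP α₂ β₁ β₂ * I z * (bP α₂ β₁ β₂ * (sigmaP α₂ β₁ β₂ - 1) + bP α₂ β₁ β₂ * M z - I z)
        / (α₂ * I z + β₂ * (1 - M z)) := fun z => rfl
  have hFcont : Continuous (fun z => fP α₂ β₁ β₂ (M z) (I z)) := by
    have heq : (fun z => fP α₂ β₁ β₂ (M z) (I z)) = fun z =>
        aP α₂ β₁ β₂ * I z * (bP α₂ β₁ β₂ * (sigmaP α₂ β₁ β₂ - 1) + bP α₂ β₁ β₂ * M z - I z)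
          / (α₂ * I z + β₂ * (1 - M z)) := funext hFeq
    rw [heq]
    exact Continuous.div
      ((continuous_const.mul hI.continuous).mul
        ((continuous_const.add (continuous_const.mul hM.continuous)).sub hI.continuous))
      ((continuous_const.mul hI.continuous).add
        (continuous_const.mul (continuous_const.sub hM.continuous)))
      (fun z => (hden z).ne')
  -- sign extraction at local extrema
  have hBle : ∀ t : ℝ, IsLocalMax I t → 0 < I t →
      I t ≤ bP α₂ β₁ β₂ * (sigmaP α₂ β₁ β₂ - 1) + bP α₂ β₁ β₂ * M t := by
    intro t hmax hIt
    have hF := localmax_F_nonneg hδ hD hI hI' hFcont h.odeI hmax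
    rw [hFeq t] at hF
    have h1 : 0 ≤ aP α₂ β₁ β₂ * I t
        * (bP α₂ β₁ β₂ * (sigmaP α₂ β₁ β₂ - 1) + bP α₂ β₁ β₂ * M t - I t) := by
      have h2 := mul_nonneg hF (hden t).le
      rwa [div_mul_cancel₀ _ (hden t).ne'] at h2
    nlinarith [mul_pos ha0 hIt]
  have hBge : ∀ t : ℝ, IsLocalMin I t → 0 < I t →
      bP α₂ β₁ β₂ * (sigmaP α₂ β₁ β₂ - 1) + bP α₂ β₁ β₂ * M t ≤ I t := by
    intro t hmin hIt
    have hF := localmin_F_nonpos hδ hD hI hI' hFcont h.odeI hmin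
    rw [hFeq t] at hF
    have h1 : aP α₂ β₁ β₂ * I t
        * (bP α₂ β₁ β₂ * (sigmaP α₂ β₁ β₂ - 1) + bP α₂ β₁ β₂ * M t - I t) ≤ 0 := by
      have h2 := mul_nonpos_of_nonpos_of_nonneg hF (hden t).le
      rwa [div_mul_cancel₀ _ (hden t).ne'] at h2
    nlinarith [mul_pos ha0 hIt]
  -- weak step : deriv I ≤ 0 everywhere
  have hIle : ∀ z, deriv I z ≤ 0 := by
    by_contra hcon
    push_neg at hcon
    obtain ⟨z₀, hz₀⟩ := hcon
    -- a point to the right with strictly larger value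
    obtain ⟨w, hwgt, hIw⟩ : ∃ w, z₀ < w ∧ I z₀ < I w := by
      have hs := (hI z₀).hasDerivAt
      rw [hasDerivAt_iff_tendsto_slope] at hs
      have hmono : nhdsWithin z₀ (Set.Ioi z₀) ≤ nhdsWithin z₀ {z₀}ᶜ :=
        nhdsWithin_mono z₀ (fun x hx => ne_of_gt hx)
      have hev : ∀ᶠ x in nhdsWithin z₀ (Set.Ioi z₀), 0 < slope I z₀ x :=
        (hs.mono_left hmono).eventually (eventually_gt_nhds hz₀)
      obtain ⟨x, hx1, hx2⟩ := (hev.and eventually_mem_nhdsWithin).exists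
      refine ⟨x, hx2, ?_⟩
      rw [slope_def_field, div_pos_iff] at hx1
      rcases hx1 with ⟨h1, _⟩ | ⟨_, h2⟩
      · linarith
      · have : (0:ℝ) < x - z₀ := sub_pos.mpr hx2
        linarith
    have hIwpos : 0 < I w := lt_of_le_of_lt (h.rangeI z₀).1 hIw
    -- right endpoint
    obtain ⟨Bz, hBz⟩ := Filter.eventually_atTop.mp (h.limI_top.eventually_lt_const hIwpos)
    set Bz' : ℝ := max Bz (w + 1) with hBz'def
    have hwB : w < Bz' := lt_of_lt_of_le (by linarith) (le_max_right _ _)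
    have hz₀B : z₀ < Bz' := lt_trans hwgt hwB
    obtain ⟨z₁, hz₁mem, hz₁max⟩ := (isCompact_Icc (a := z₀) (b := Bz')).exists_isMaxOn
      (Set.nonempty_Icc.mpr hz₀B.le) hI.continuous.continuousOn
    have hwmem : w ∈ Set.Icc z₀ Bz' := ⟨hwgt.le, hwB.le⟩
    have hIwz₁ : I w ≤ I z₁ := hz₁max hwmem
    have hIz₁pos : 0 < I z₁ := lt_of_lt_of_le hIwpos hIwz₁
    have hz₀z₁ : z₀ < z₁ := by
      rcases lt_or_eq_of_le hz₁mem.1 with h1 | h1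
      · exact h1
      · exfalso; rw [← h1] at hIwz₁; linarith
    have hz₁B : z₁ < Bz' := by
      rcases lt_or_eq_of_le hz₁mem.2 with h1 | h1
      · exact h1
      · exfalso
        have h2 : I Bz' < I w := hBz Bz' (le_max_left _ _)
        rw [h1] at hIwz₁
        linarith
    have hlocmax : IsLocalMax I z₁ := by
      have hnb : Set.Ioo z₀ Bz' ∈ nhds z₁ := Ioo_mem_nhds hz₀z₁ hz₁B
      filter_upwards [hnb] with x hx
      exact hz₁max ⟨hx.1.le, hx.2.le⟩
    have hmax1 := hBle z₁ hlocmax hIz₁pos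
    have hIz₀lt : I z₀ < bP α₂ β₁ β₂ * sigmaP α₂ β₁ β₂ := by
      nlinarith [hMlt1 z₁, hb0, hIw, hIwz₁]
    -- left endpoint
    set t0 : ℝ := (I z₀ + bP α₂ β₁ β₂ * sigmaP α₂ β₁ β₂) / 2 with ht0def
    have ht01 : I z₀ < t0 := by rw [ht0def]; linarith
    have ht02 : t0 < bP α₂ β₁ β₂ * sigmaP α₂ β₁ β₂ := by rw [ht0def]; linarith
    obtain ⟨Az, hAz⟩ := Filter.eventually_atBot.mp (h.limI_bot.eventually_const_lt ht02)
    set Az' : ℝ := min Az (z₀ - 1) with hAz'def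
    have hAz'lt : Az' < z₀ := lt_of_le_of_lt (min_le_right _ _) (by linarith)
    have hAz'z₁ : Az' < z₁ := lt_trans hAz'lt hz₀z₁
    obtain ⟨z₂, hz₂mem, hz₂min⟩ := (isCompact_Icc (a := Az') (b := z₁)).exists_isMinOn
      (Set.nonempty_Icc.mpr hAz'z₁.le) hI.continuous.continuousOn
    have hz₀mem : z₀ ∈ Set.Icc Az' z₁ := ⟨hAz'lt.le, hz₀z₁.le⟩
    have hIz₂le : I z₂ ≤ I z₀ := hz₂min hz₀mem
    have hAz'z₂ : Az' < z₂ := by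
      rcases lt_or_eq_of_le hz₂mem.1 with h1 | h1
      · exact h1
      · exfalso
        have h2 : t0 < I Az' := hAz Az' (min_le_left _ _)
        rw [← h1] at hIz₂le
        linarith
    have hz₂z₁ : z₂ < z₁ := by
      rcases lt_or_eq_of_le hz₂mem.2 with h1 | h1
      · exact h1
      · exfalso; rw [h1] at hIz₂le; linarith
    have hlocmin : IsLocalMin I z₂ := by
      have hnb : Set.Ioo Az' z₁ ∈ nhds z₂ := Ioo_mem_nhds hAz'z₂ hz₂z₁
      filter_upwards [hnb] with x hx
      exact hz₂min ⟨hx.1.le, hx.2.le⟩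
    rcases (lt_or_eq_of_le (h.rangeI z₂).1) with hIz₂pos | hIz₂zero
    · have hmin1 := hBge z₂ hlocmin hIz₂pos
      have hMM : M z₁ < M z₂ := hManti hz₂z₁
      nlinarith [hb0]
    · exact I_zero_backward hα₂ hβ₁ hβ₂ hD hδ hσ hI hI' h.rangeM h.rangeI hM.continuous
        hMlt1 h.odeI h.limI_bot hIz₂zero.symm hlocmin.deriv_eq_zero
  -- strict step
  intro z
  refine ⟨hMneg z, ?_⟩
  by_contra hcon2
  have hz0 : deriv I z = 0 := le_antisymm (hIle z) (not_lt.mp hcon2)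
  have hlocmax' : IsLocalMax (deriv I) z :=
    Filter.Eventually.of_forall (fun x => (hIle x).trans hz0.symm.le)
  have hI''0 : deriv (deriv I) z = 0 := hlocmax'.deriv_eq_zero
  have hF0 : fP α₂ β₁ β₂ (M z) (I z) = 0 := by
    have hode := h.odeI z
    rw [hz0, hI''0] at hode
    simpa using hode
  have h1 : aP α₂ β₁ β₂ * I z
      * (bP α₂ β₁ β₂ * (sigmaP α₂ β₁ β₂ - 1) + bP α₂ β₁ β₂ * M z - I z) = 0 := by
    rw [hFeq z, div_eq_zero_iff] at hF0
    rcases hF0 with h2 | h2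
    · exact h2
    · exact absurd h2 (hden z).ne'
  by_cases hIz : I z = 0
  · exact I_zero_backward hα₂ hβ₁ hβ₂ hD hδ hσ hI hI' h.rangeM h.rangeI hM.continuous
      hMlt1 h.odeI h.limI_bot hIz hz0
  · have hIzpos : 0 < I z := lt_of_le_of_ne (h.rangeI z).1 (Ne.symm hIz)
    have hE0 : bP α₂ β₁ β₂ * (sigmaP α₂ β₁ β₂ - 1) + bP α₂ β₁ β₂ * M z - I z = 0 := by
      rcases mul_eq_zero.mp h1 with h2 | h2
      · exfalso; exact (mul_pos ha0 hIzpos).ne' h2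
      · exact h2
    have hIanti : Antitone I := antitone_of_deriv_nonpos hI hIle
    -- φ is strictly increasing near z
    set P : ℝ → ℝ := fun x => deriv I x - bP α₂ β₁ β₂ * deriv M x with hPdef
    have hPcont : Continuous P := hI'.continuous.sub (continuous_const.mul hM'.continuous)
    have hPz : 0 < P z := by
      simp only [hPdef, hz0, zero_sub]
      nlinarith [hMneg z, hb0]
    have hPev : ∀ᶠ x in nhds z, 0 < P x :=
      hPcont.continuousAt.preimage_mem_nhds (Ioi_mem_nhds hPz)
    obtain ⟨ε, hε, hball⟩ := Metric.eventually_nhds_iff_ball.mp hPev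
    set w : ℝ := z - ε / 2 with hwdef
    have hwz : w < z := by rw [hwdef]; linarith
    have hmem : ∀ x ∈ Set.Icc w z, x ∈ Metric.ball z ε := by
      intro x hx
      have h1 := hx.1
      have h2 := hx.2
      rw [hwdef] at *
      rw [Metric.mem_ball, Real.dist_eq, abs_lt]
      constructor <;> linarith
    set φ : ℝ → ℝ := fun x =>
      I x - (bP α₂ β₁ β₂ * (sigmaP α₂ β₁ β₂ - 1) + bP α₂ β₁ β₂ * M x) with hφdef
    have hφder : ∀ x, HasDerivAt φ (P x) x := by
      intro x
      have hB : HasDerivAt (fun x => bP α₂ β₁ β₂ * (sigmaP α₂ β₁ β₂ - 1)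
          + bP α₂ β₁ β₂ * M x) (bP α₂ β₁ β₂ * deriv M x) x :=
        (((hM x).hasDerivAt).const_mul (bP α₂ β₁ β₂)).const_add _
      exact ((hI x).hasDerivAt).sub hB
    have hφmono : StrictMonoOn φ (Set.Icc w z) := by
      apply strictMonoOn_of_deriv_pos (convex_Icc _ _)
        (hI.continuous.sub (continuous_const.add (continuous_const.mul hM.continuous))).continuousOn
      intro x hx
      rw [interior_Icc] at hx
      show 0 < deriv φ x
      rw [(hφder x).deriv]
      exact hball x (hmem x ⟨hx.1.le, hx.2.le⟩)
    have hφz : φ z = 0 := by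
      simp only [hφdef]
      linarith
    have hφneg : ∀ x ∈ Set.Ico w z, I x
        < bP α₂ β₁ β₂ * (sigmaP α₂ β₁ β₂ - 1) + bP α₂ β₁ β₂ * M x := by
      intro x hx
      have h2 : φ x < φ z := hφmono ⟨hx.1, hx.2.le⟩ (Set.right_mem_Icc.mpr hwz.le) hx.2
      rw [hφz] at h2
      simp only [hφdef] at h2
      linarith
    have hFpos : ∀ x ∈ Set.Ico w z, 0 < fP α₂ β₁ β₂ (M x) (I x) := by
      intro x hx
      have hIx : 0 < I x := lt_of_lt_of_le hIzpos (hIanti hx.2.le)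
      rw [hFeq x]
      apply div_pos _ (hden x)
      exact mul_pos (mul_pos ha0 hIx) (sub_pos.mpr (hφneg x hx))
    -- k is strictly decreasing on [w, z]
    set k : ℝ → ℝ := fun x => Real.exp (v / D * x) * deriv I x with hkdef
    have hkc : Continuous k := by
      have : Continuous (deriv I) := hI'.continuous
      fun_prop
    have hkanti : StrictAntiOn k (Set.Icc w z) := by
      apply strictAntiOn_of_deriv_neg (convex_Icc _ _) hkc.continuousOn
      intro x hx
      rw [interior_Icc] at hx
      rw [(k_hasderiv hδ hD hI' h.odeI x).deriv]
      have hFx := hFpos x ⟨hx.1.le, hx.2⟩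
      have : -(fP α₂ β₁ β₂ (M x) (I x)) / (δ * D) < 0 :=
        div_neg_of_neg_of_pos (by linarith) (mul_pos hδ hD)
      exact mul_neg_of_pos_of_neg (Real.exp_pos _) this
    have hkz : k z = 0 := by simp [hkdef, hz0]
    have hkw : 0 < k w := by
      have := hkanti (Set.left_mem_Icc.mpr hwz.le) (Set.right_mem_Icc.mpr hwz.le) hwz
      rw [hkz] at this
      exact this
    have hIw' : 0 < deriv I w := by
      rw [hkdef] at hkw
      have := Real.exp_pos (v / D * w)
      nlinarith
    exact absurd hIw' (not_lt.mpr (hIle w))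
end

section
/- Let b > 0 and v = √(b/2). Then the function M(z) = exp(−vz)/(1 + exp(−vz)) satisfies M''(z) + v M'(z) + b M(z)²(1 − M(z)) = 0 for all z ∈ ℝ; moreover M(z) ∈ (0,1) for all z, M is strictly monotone decreasing, M(0) = 1/2, M(z) → 1 as z → −∞ and M(z) → 0 as z → +∞. -/
open Real Filter

private lemma exp_hasDeriv (v z : ℝ) :
    HasDerivAt (fun z => Real.exp (-v * z)) (-v * Real.exp (-v * z)) z := by
  have h : HasDerivAt (fun z : ℝ => -v * z) (-v) z := by
    simpa using (hasDerivAt_id z).const_mul (-v)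
  simpa [mul_comm] using h.exp

private lemma denom_pos (v z : ℝ) : 0 < 1 + Real.exp (-v * z) := by positivity

private lemma M_hasDeriv (v z : ℝ) :
    HasDerivAt (fun z => Real.exp (-v * z) / (1 + Real.exp (-v * z)))
      (-v * Real.exp (-v * z) / (1 + Real.exp (-v * z)) ^ 2) z := by
  have he := exp_hasDeriv v z
  have hden : HasDerivAt (fun z => 1 + Real.exp (-v * z)) (-v * Real.exp (-v * z)) z := by
    simpa using he.const_add 1
  have := he.fun_div hden (denom_pos v z).ne'
  refine this.congr_deriv ?_
  rw [div_eq_div_iff (by positivity) (by positivity)]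
  ring

private lemma M_deriv (v : ℝ) :
    deriv (fun z => Real.exp (-v * z) / (1 + Real.exp (-v * z)))
      = fun z => -v * Real.exp (-v * z) / (1 + Real.exp (-v * z)) ^ 2 := by
  funext z
  exact (M_hasDeriv v z).deriv

private lemma M_deriv2 (v z : ℝ) :
    HasDerivAt (fun z => -v * Real.exp (-v * z) / (1 + Real.exp (-v * z)) ^ 2)
      ((v ^ 2 * Real.exp (-v * z) * (1 - Real.exp (-v * z))) / (1 + Real.exp (-v * z)) ^ 3) z := by
  have he := exp_hasDeriv v z
  have hnum : HasDerivAt (fun z => -v * Real.exp (-v * z))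
      (-v * (-v * Real.exp (-v * z))) z := he.const_mul (-v)
  have hden : HasDerivAt (fun z => (1 + Real.exp (-v * z)) ^ 2)
      (2 * (1 + Real.exp (-v * z)) ^ 1 * (-v * Real.exp (-v * z))) z := by
    simpa using (he.const_add 1).fun_pow 2
  have hne : ((1 + Real.exp (-v * z)) ^ 2) ≠ 0 := by positivity
  have := hnum.fun_div hden hne
  refine this.congr_deriv ?_
  have h := (denom_pos v z).ne'
  rw [div_eq_div_iff (by positivity) (by positivity)]
  ring

/-- The explicit minimum-speed travelling wave of the cubic Fisher equation:
`M(z) = exp(-vz)/(1 + exp(-vz))` with `v = √(b/2)` satisfies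
`M'' + v M' + b M²(1-M) = 0`, takes values in `(0,1)`, is strictly decreasing, has
`M(0) = 1/2`, and tends to `1` at `-∞` and to `0` at `+∞`. -/
theorem cubic_fisher_explicit_wave (b : ℝ) (hb : 0 < b) :
    let v := Real.sqrt (b / 2)
    let M : ℝ → ℝ := fun z => Real.exp (-v * z) / (1 + Real.exp (-v * z))
    (∀ z, deriv (deriv M) z + v * deriv M z + b * (M z) ^ 2 * (1 - M z) = 0) ∧
    (∀ z, M z ∈ Set.Ioo (0 : ℝ) 1) ∧
    StrictAnti M ∧
    M 0 = 1 / 2 ∧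
    Filter.Tendsto M Filter.atBot (nhds 1) ∧
    Filter.Tendsto M Filter.atTop (nhds 0) := by
  intro v M
  have hv : 0 < v := Real.sqrt_pos.mpr (by linarith)
  have hv2 : v ^ 2 = b / 2 := Real.sq_sqrt (by linarith)
  refine ⟨?_, ?_, ?_, ?_, ?_, ?_⟩
  · intro z
    have hd1 : deriv M = fun z => -v * Real.exp (-v * z) / (1 + Real.exp (-v * z)) ^ 2 :=
      M_deriv v
    rw [hd1]
    rw [(M_deriv2 v z).deriv]
    have hE : 0 < Real.exp (-v * z) := Real.exp_pos _
    have hden := denom_pos v z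
    show (v ^ 2 * Real.exp (-v * z) * (1 - Real.exp (-v * z))) / (1 + Real.exp (-v * z)) ^ 3
      + v * (-v * Real.exp (-v * z) / (1 + Real.exp (-v * z)) ^ 2)
      + b * (Real.exp (-v * z) / (1 + Real.exp (-v * z))) ^ 2
        * (1 - Real.exp (-v * z) / (1 + Real.exp (-v * z))) = 0
    have hb2 : b = 2 * v ^ 2 := by rw [hv2]; ring
    rw [hb2]
    field_simp
    ring
  · intro z
    have hE : 0 < Real.exp (-v * z) := Real.exp_pos _
    have hden := denom_pos v z
    constructor
    · positivity
    · rw [div_lt_one hden]; linarith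
  · apply strictAnti_of_deriv_neg
    intro z
    rw [show deriv M z = -v * Real.exp (-v * z) / (1 + Real.exp (-v * z)) ^ 2 from
      (M_hasDeriv v z).deriv]
    have hE : 0 < Real.exp (-v * z) := Real.exp_pos _
    have hden := denom_pos v z
    apply div_neg_of_neg_of_pos
    · nlinarith
    · positivity
  · show Real.exp (-v * 0) / (1 + Real.exp (-v * 0)) = 1 / 2
    norm_num
  · have hMeq : ∀ z, M z = (Real.exp (v * z) + 1)⁻¹ := by
      intro z
      show Real.exp (-v * z) / (1 + Real.exp (-v * z)) = _
      rw [show -v * z = -(v * z) by ring, Real.exp_neg]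
      have h1 : Real.exp (v * z) ≠ 0 := (Real.exp_pos _).ne'
      have h2 : Real.exp (v * z) + 1 ≠ 0 := by positivity
      field_simp
    simp only [funext hMeq]
    have hlin : Tendsto (fun z : ℝ => v * z) atBot atBot := by
      exact (tendsto_const_mul_atBot_of_neg (by linarith : -v < 0)).2
        (by simpa using tendsto_neg_atBot_atTop) |>.congr (by intro x; ring) |>.mono_left le_rfl
    have := (Real.tendsto_exp_atBot.comp hlin).add (tendsto_const_nhds (x := (1:ℝ)))
    have h2 : Tendsto (fun z : ℝ => Real.exp (v * z) + 1) atBot (nhds 1) := by simpa using this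
    simpa using h2.inv₀ one_ne_zero
  · have hlin : Tendsto (fun z : ℝ => -v * z) atTop atBot :=
      (tendsto_const_mul_atBot_of_neg (by linarith : -v < 0)).2 tendsto_id
    have he : Tendsto (fun z : ℝ => Real.exp (-v * z)) atTop (nhds 0) :=
      Real.tendsto_exp_atBot.comp hlin
    have hd : Tendsto (fun z : ℝ => 1 + Real.exp (-v * z)) atTop (nhds 1) := by
      simpa using (tendsto_const_nhds (x := (1:ℝ))).add he
    have h0 : Tendsto (fun z : ℝ => Real.exp (-v * z) / (1 + Real.exp (-v * z))) atTop
        (nhds (0 / 1)) := he.div hd one_ne_zero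
    norm_num at h0
    exact h0.congr fun z => by show _ = rexp (-v * z) / (1 + rexp (-v * z)); rw [neg_mul]
end

section
/- (Proposition 4.4) Let σ > 1 and let (M_T, I_T) be an LPTW with speed v > 0. Then M_T(z) = 0 and I_T(z) > 0 for all z ∈ ℝ. -/
/-- A lower transition permanent form travelling wave ([LPTW]) with speed `v`:
a pair of C² profiles with values in `[0,1]²`, satisfying the travelling-wave ODEs
`M'' + v M' + I M (1 - M) = 0` and `δ (D I'' + v I') + f(M, I) = 0`, connecting
the transitional state `(0, b(σ)(σ-1))` at `-∞` to the zero state `(0,0)` at `+∞`. -/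
structure IsLPTW (α₂ β₁ β₂ δ D v : ℝ) (M I : ℝ → ℝ) : Prop where
  smoothM : ContDiff ℝ 2 M
  smoothI : ContDiff ℝ 2 I
  rangeM : ∀ z, M z ∈ Set.Icc (0 : ℝ) 1
  rangeI : ∀ z, I z ∈ Set.Icc (0 : ℝ) 1
  odeM : ∀ z, deriv (deriv M) z + v * deriv M z + I z * M z * (1 - M z) = 0
  odeI : ∀ z, δ * (D * deriv (deriv I) z + v * deriv I z) + fP α₂ β₁ β₂ (M z) (I z) = 0
  limM_top : Filter.Tendsto M Filter.atTop (nhds 0)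
  limI_top : Filter.Tendsto I Filter.atTop (nhds 0)
  limM_bot : Filter.Tendsto M Filter.atBot (nhds 0)
  limI_bot : Filter.Tendsto I Filter.atBot (nhds (bP α₂ β₁ β₂ * (sigmaP α₂ β₁ β₂ - 1)))

/-- Proposition 4.4: for `σ > 1`, an [LPTW] has identically vanishing mutant component and
strictly positive immune component. -/
theorem lptw_components (α₂ β₁ β₂ δ D v : ℝ)
    (hα₂ : 0 < α₂) (hβ₁ : 0 < β₁) (hβ₂ : 0 < β₂) (hD : 0 < D) (hδ : 0 < δ)
    (hσ : 1 < sigmaP α₂ β₁ β₂)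
    (hv : 0 < v) (M I : ℝ → ℝ) (h : IsLPTW α₂ β₁ β₂ δ D v M I) :
    ∀ z : ℝ, M z = 0 ∧ 0 < I z := by
  have hdM : Differentiable ℝ M := h.smoothM.differentiable (by norm_num)
  have hdI : Differentiable ℝ I := h.smoothI.differentiable (by norm_num)
  have hdM' : Differentiable ℝ (deriv M) :=
    (((contDiff_succ_iff_deriv (n := 1)).mp (by exact_mod_cast h.smoothM)).2.2).differentiable
      (by norm_num)
  have hdI' : Differentiable ℝ (deriv I) :=
    (((contDiff_succ_iff_deriv (n := 1)).mp (by exact_mod_cast h.smoothI)).2.2).differentiable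
      (by norm_num)
  -- Part A : M ≡ 0
  set g : ℝ → ℝ := fun z => Real.exp (v * z) * deriv M z with hgdef
  have hg' : ∀ z, HasDerivAt g
      (Real.exp (v * z) * (v * deriv M z + deriv (deriv M) z)) z := by
    intro z
    have h1 : HasDerivAt (fun z => Real.exp (v * z)) (v * Real.exp (v * z)) z := by
      exact ((Real.hasDerivAt_exp (v * z)).comp z
        ((hasDerivAt_id z).const_mul v)).congr_deriv (by ring)
    have h2 : HasDerivAt (deriv M) (deriv (deriv M) z) z := (hdM' z).hasDerivAt
    have h3 := h1.mul h2
    exact h3.congr_deriv (by ring)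
  have hgmono : Antitone g := by
    apply antitone_of_deriv_nonpos (fun z => (hg' z).differentiableAt)
    intro z
    rw [(hg' z).deriv]
    have hode := h.odeM z
    have hnn : 0 ≤ I z * M z * (1 - M z) := by
      have h1 := (h.rangeI z).1
      have h2 := (h.rangeM z).1
      have h3 := (h.rangeM z).2
      have h4 : 0 ≤ 1 - M z := by linarith
      positivity
    have hle : v * deriv M z + deriv (deriv M) z ≤ 0 := by linarith
    have he : (0:ℝ) < Real.exp (v * z) := Real.exp_pos _
    nlinarith
  have hM'le : ∀ z, deriv M z ≤ 0 := by
    intro z₁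
    by_contra hc
    push_neg at hc
    have hcpos : 0 < g z₁ := mul_pos (Real.exp_pos _) hc
    set ε := g z₁ / Real.exp (v * z₁) with hεdef
    have hεpos : 0 < ε := div_pos hcpos (Real.exp_pos _)
    have hlow : ∀ z ≤ z₁, ε ≤ deriv M z := by
      intro z hz
      have h1 : g z₁ ≤ g z := hgmono hz
      have h2 : Real.exp (v * z) ≤ Real.exp (v * z₁) :=
        Real.exp_le_exp.mpr (by nlinarith)
      have h3 : deriv M z = g z / Real.exp (v * z) := by
        rw [hgdef]; field_simp
      rw [h3, hεdef]
      exact div_le_div₀ (le_trans hcpos.le h1) h1 (Real.exp_pos _) h2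
    have hmono : MonotoneOn (fun z => M z - ε * z) (Set.Iic z₁) := by
      apply monotoneOn_of_deriv_nonneg (convex_Iic z₁)
      · exact ((hdM.continuous).sub (continuous_const.mul continuous_id)).continuousOn
      · exact (hdM.sub (differentiable_id.const_mul ε)).differentiableOn
      · intro x hx
        rw [interior_Iic] at hx
        have hder : deriv (fun z => M z - ε * z) x = deriv M x - ε := by
          have hh := ((hdM x).hasDerivAt.sub ((hasDerivAt_id x).const_mul ε)).deriv
          rw [← (show deriv M x - ε * 1 = deriv M x - ε by ring)]
          exact hh
        rw [hder]
        have := hlow x (le_of_lt hx)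
        linarith
    have hz₂le : z₁ - 2 / ε ≤ z₁ := by
      have : 0 < 2 / ε := by positivity
      linarith
    have hkey := hmono (Set.mem_Iic.mpr hz₂le) (Set.mem_Iic.mpr (le_refl z₁)) hz₂le
    simp only at hkey
    have hεz : ε * (2 / ε) = 2 := by field_simp
    have hM1 := (h.rangeM z₁).2
    have hM2 := (h.rangeM (z₁ - 2 / ε)).1
    nlinarith [hkey]
  have hManti : Antitone M := antitone_of_deriv_nonpos hdM hM'le
  have hM0 : ∀ z, M z = 0 := by
    intro z
    have hle : M z ≤ 0 := by
      refine ge_of_tendsto h.limM_bot ?_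
      filter_upwards [Filter.eventually_le_atBot z] with w hw
      exact hManti hw
    exact le_antisymm hle (h.rangeM z).1
  refine fun z => ⟨hM0 z, ?_⟩
  -- Part B : I > 0
  by_contra hIc
  push_neg at hIc
  have hIz0 : I z = 0 := le_antisymm hIc (h.rangeI z).1
  set z₀ := z with hz₀def
  have hd0 : 0 < β₂ * sigmaP α₂ β₁ β₂ + α₂ := by positivity
  set L := bP α₂ β₁ β₂ * (sigmaP α₂ β₁ β₂ - 1) with hLdef
  have hbpos : 0 < bP α₂ β₁ β₂ := div_pos hβ₂ hd0
  have hLpos : 0 < L := mul_pos hbpos (by linarith)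
  have hapos : 0 < aP α₂ β₁ β₂ := mul_pos hβ₁ hd0
  set c : ℝ → ℝ := fun t => aP α₂ β₁ β₂ * (L - I t) / (α₂ * I t + β₂) with hcdef
  have hdenpos : ∀ t, 0 < α₂ * I t + β₂ := by
    intro t
    have := (h.rangeI t).1
    nlinarith
  have hfc : ∀ t, fP α₂ β₁ β₂ (M t) (I t) = c t * I t := by
    intro t
    rw [hM0 t]
    simp only [fP, hcdef, mul_zero, add_zero, sub_zero, mul_one]
    rw [div_mul_eq_mul_div]
    congr 1
    ring
  have hode2 : ∀ t, deriv (deriv I) t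
      = -(v / D) * deriv I t - c t / (δ * D) * I t := by
    intro t
    have hode := h.odeI t
    rw [hfc t] at hode
    clear_value c
    field_simp
    linear_combination hode
  set Ca := aP α₂ β₁ β₂ * (L + 1) / β₂ with hCadef
  have hCapos : 0 < Ca := by positivity
  have hCa : ∀ t, |c t| ≤ Ca := by
    intro t
    rw [hcdef, hCadef]
    simp only
    rw [abs_div, abs_of_pos (hdenpos t)]
    have h1 : |aP α₂ β₁ β₂ * (L - I t)| ≤ aP α₂ β₁ β₂ * (L + 1) := by
      rw [abs_mul, abs_of_pos hapos]
      have hIt1 := (h.rangeI t).1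
      have hIt2 := (h.rangeI t).2
      have habs : |L - I t| ≤ L + 1 := abs_le.mpr ⟨by linarith, by linarith⟩
      exact mul_le_mul_of_nonneg_left habs hapos.le
    have h2 : β₂ ≤ α₂ * I t + β₂ := by nlinarith [(h.rangeI t).1]
    exact div_le_div₀ (by positivity) h1 hβ₂ h2
  -- the first-order system and its Lipschitz vector field
  set V : ℝ → ℝ × ℝ → ℝ × ℝ :=
    fun t p => (p.2, -(v / D) * p.2 - c t / (δ * D) * p.1) with hVdef
  set Kr : ℝ := 1 + v / D + Ca / (δ * D) with hKrdef
  have hKrpos : (0:ℝ) < Kr := by positivity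
  set K : NNReal := ⟨Kr, hKrpos.le⟩ with hKdef
  have hKcoe : (K : ℝ) = Kr := rfl
  have hlip : ∀ t, LipschitzWith K (V t) := by
    intro t
    apply LipschitzWith.of_dist_le_mul
    intro p q
    rw [hKcoe, Prod.dist_eq, Prod.dist_eq]
    have hd1 : dist p.1 q.1 ≤ max (dist p.1 q.1) (dist p.2 q.2) := le_max_left _ _
    have hd2 : dist p.2 q.2 ≤ max (dist p.1 q.1) (dist p.2 q.2) := le_max_right _ _
    have hd0' : 0 ≤ max (dist p.1 q.1) (dist p.2 q.2) := le_trans dist_nonneg hd1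
    apply max_le
    · simp only [hVdef]
      have hK1 : (1:ℝ) ≤ Kr := by
        rw [hKrdef]
        have : 0 ≤ v / D := by positivity
        have : 0 ≤ Ca / (δ * D) := by positivity
        linarith [div_nonneg hv.le hD.le, div_nonneg hCapos.le (by positivity : (0:ℝ) ≤ δ * D)]
      nlinarith [hd2, hd0']
    · simp only [hVdef]
      rw [Real.dist_eq]
      have he : -(v / D) * p.2 - c t / (δ * D) * p.1 - (-(v / D) * q.2 - c t / (δ * D) * q.1)
          = -(v / D) * (p.2 - q.2) - c t / (δ * D) * (p.1 - q.1) := by ring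
      rw [he]
      have h1 : |(-(v / D) * (p.2 - q.2) - c t / (δ * D) * (p.1 - q.1))|
          ≤ v / D * |p.2 - q.2| + |c t| / (δ * D) * |p.1 - q.1| := by
        calc |(-(v / D) * (p.2 - q.2) - c t / (δ * D) * (p.1 - q.1))|
            ≤ |(-(v / D) * (p.2 - q.2))| + |c t / (δ * D) * (p.1 - q.1)| := abs_sub _ _
          _ = v / D * |p.2 - q.2| + |c t| / (δ * D) * |p.1 - q.1| := by
              rw [abs_mul, abs_mul, abs_neg, abs_div, abs_div, abs_of_pos hv, abs_of_pos hD,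
                abs_of_pos (mul_pos hδ hD)]
      have h2 : |c t| / (δ * D) ≤ Ca / (δ * D) :=
        (div_le_div_iff_of_pos_right (by positivity)).mpr (hCa t)
      rw [Real.dist_eq, Real.dist_eq] at hd1 hd2 hd0' ⊢
      have h3 : (0:ℝ) ≤ v / D := by positivity
      have h4 : (0:ℝ) ≤ |p.1 - q.1| := abs_nonneg _
      have h5 : (0:ℝ) ≤ |p.2 - q.2| := abs_nonneg _
      calc |(-(v / D) * (p.2 - q.2) - c t / (δ * D) * (p.1 - q.1))|
          ≤ v / D * |p.2 - q.2| + |c t| / (δ * D) * |p.1 - q.1| := h1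
        _ ≤ v / D * (|p.1 - q.1| ⊔ |p.2 - q.2|) + Ca / (δ * D) * (|p.1 - q.1| ⊔ |p.2 - q.2|) :=
            add_le_add (mul_le_mul_of_nonneg_left hd2 h3)
              (mul_le_mul h2 hd1 h4 (by positivity))
        _ ≤ Kr * (|p.1 - q.1| ⊔ |p.2 - q.2|) := by
            rw [hKrdef]
            nlinarith [hd0']
  -- the trajectory of the first-order system
  set γ : ℝ → ℝ × ℝ := fun t => (I t, deriv I t) with hγdef
  have hγ' : ∀ t, HasDerivAt γ (V t (γ t)) t := by
    intro t
    have h1 : HasDerivAt γ (deriv I t, deriv (deriv I) t) t :=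
      (hdI t).hasDerivAt.prodMk (hdI' t).hasDerivAt
    have h2 : V t (γ t) = (deriv I t, deriv (deriv I) t) := by
      simp only [hVdef, hγdef]
      exact Prod.ext rfl (hode2 t).symm
    rw [h2]
    exact h1
  -- `γ z₀ = 0`, since `I` attains its minimum there
  have hI'z0 : deriv I z₀ = 0 := by
    apply IsLocalMin.deriv_eq_zero
    apply Filter.Eventually.of_forall
    intro x
    rw [hIz0]
    exact (h.rangeI x).1
  have hγz0 : γ z₀ = ((0:ℝ), (0:ℝ)) := by
    simp only [hγdef, hIz0, hI'z0]
  -- uniqueness of solutions: `γ ≡ 0`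
  have hIall : ∀ w, I w = 0 := by
    intro w
    have hmem : z₀ ∈ Set.Ioo (min w z₀ - 1) (max w z₀ + 1) :=
      ⟨by have := min_le_right w z₀; linarith, by have := le_max_right w z₀; linarith⟩
    have hmemw : w ∈ Set.Ioo (min w z₀ - 1) (max w z₀ + 1) :=
      ⟨by have := min_le_left w z₀; linarith, by have := le_max_left w z₀; linarith⟩
    have hzero : ∀ t ∈ Set.Ioo (min w z₀ - 1) (max w z₀ + 1),
        HasDerivAt (fun _ : ℝ => ((0:ℝ), (0:ℝ))) (V t ((0:ℝ), (0:ℝ))) t ∧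
          ((0:ℝ), (0:ℝ)) ∈ Set.univ := by
      intro t _
      refine ⟨?_, trivial⟩
      have : V t ((0:ℝ), (0:ℝ)) = ((0:ℝ), (0:ℝ)) := by
        simp [hVdef]
      rw [this]
      exact hasDerivAt_const t _
    have heq := ODE_solution_unique_of_mem_Ioo
      (fun t _ => (hlip t).lipschitzOnWith (s := Set.univ)) hmem
      (fun t _ => ⟨hγ' t, trivial⟩) hzero hγz0
    have h1 := heq hmemw
    simp only [hγdef, Prod.ext_iff] at h1
    exact h1.1
  -- contradiction with the limit at `-∞`
  have hI0fun : I = fun _ => (0:ℝ) := funext hIall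
  have hlim := h.limI_bot
  rw [hI0fun] at hlim
  have : bP α₂ β₁ β₂ * (sigmaP α₂ β₁ β₂ - 1) = 0 :=
    tendsto_nhds_unique hlim tendsto_const_nhds
  rw [← hLdef] at this
  linarith
end

section
/- (Speed bound within Theorem 4.9, eqn (4.129)) Let σ > 1 and suppose there exists an FPTW with speed v > 0. Then v ≥ 2·√(D(σ−1)β₁/δ). -/
set_option maxHeartbeats 4000000


lemma aux_cross (K x y : ℝ) (hK : 0 ≤ K) : 2 * |y| * (K * x) ≤ K * (x ^ 2 + y ^ 2) := by
  nlinarith [mul_nonneg hK (sq_nonneg (x - |y|)), sq_abs y]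

lemma gron_fwd (E E' : ℝ → ℝ) (hE : ∀ z, HasDerivAt E (E' z) z) (C : ℝ)
    (hineq : ∀ z, E' z ≤ C * E z) (hnn : ∀ z, 0 ≤ E z) (z₀ : ℝ) (h0 : E z₀ = 0) :
    ∀ z, z₀ ≤ z → E z = 0 := by
  set g := fun z => E z * Real.exp (-C * z) with hgdef
  have hg : ∀ z, HasDerivAt g ((E' z - C * E z) * Real.exp (-C * z)) z := by
    intro z
    have h1 : HasDerivAt (fun z : ℝ => Real.exp (-C * z)) (Real.exp (-C * z) * (-C)) z :=
      by simpa using ((hasDerivAt_id z).const_mul (-C)).exp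
    have : HasDerivAt (fun y => E y * Real.exp (-C * y)) _ z := (hE z).mul h1
    convert this using 1
    ring
  have mono : Antitone g := by
    refine antitone_of_deriv_nonpos (fun z => (hg z).differentiableAt) (fun z => ?_)
    rw [(hg z).deriv]
    have h2 := hineq z
    have h3 := (Real.exp_pos (-C * z)).le
    nlinarith
  intro z hz
  have h1 : g z ≤ g z₀ := mono hz
  have h2 : 0 ≤ g z := mul_nonneg (hnn z) (Real.exp_pos _).le
  have h4 : g z₀ = 0 := by simp [hgdef, h0]
  have h5 : g z = 0 := le_antisymm (h4 ▸ h1) h2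
  rcases mul_eq_zero.mp h5 with h | h
  · exact h
  · exact absurd h (Real.exp_ne_zero _)

lemma gron_bwd (E E' : ℝ → ℝ) (hE : ∀ z, HasDerivAt E (E' z) z) (C c Z : ℝ) (hcZ : c ≤ Z)
    (hineq : ∀ z ∈ Set.Icc c Z, -(C * E z) ≤ E' z) (hnn : ∀ z, 0 ≤ E z) (h0 : E Z = 0) :
    E c = 0 := by
  set g := fun z => E z * Real.exp (C * z) with hgdef
  have hg : ∀ z, HasDerivAt g ((E' z + C * E z) * Real.exp (C * z)) z := by
    intro z
    have h1 : HasDerivAt (fun z : ℝ => Real.exp (C * z)) (Real.exp (C * z) * C) z :=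
      by simpa using ((hasDerivAt_id z).const_mul C).exp
    have : HasDerivAt (fun y => E y * Real.exp (C * y)) _ z := (hE z).mul h1
    convert this using 1
    ring
  have mono : MonotoneOn g (Set.Icc c Z) := by
    refine monotoneOn_of_deriv_nonneg (convex_Icc c Z)
      (fun z _ => (hg z).differentiableAt.continuousAt.continuousWithinAt)
      (fun z _ => (hg z).differentiableAt.differentiableWithinAt) (fun z hz => ?_)
    rw [(hg z).deriv]
    rw [interior_Icc] at hz
    have h2 := hineq z (Set.Ioo_subset_Icc_self hz)
    have h3 := (Real.exp_pos (C * z)).le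
    nlinarith
  have h1 : g c ≤ g Z := mono (Set.left_mem_Icc.mpr hcZ) (Set.right_mem_Icc.mpr hcZ) hcZ
  have h4 : g Z = 0 := by simp [hgdef, h0]
  have h5 : g c = 0 :=
    le_antisymm (h4 ▸ h1) (mul_nonneg (hnn c) (Real.exp_pos _).le)
  rcases mul_eq_zero.mp h5 with h | h
  · exact h
  · exact absurd h (Real.exp_ne_zero _)

/-- Speed bound (4.129) in the proof of Theorem 4.9: for `σ > 1`, any [FPTW] speed `v`
satisfies `v ≥ 2 √(D (σ - 1) β₁ / δ)`. -/
theorem fptw_speed_bound (α₂ β₁ β₂ δ D v : ℝ)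
    (hα₂ : 0 < α₂) (hβ₁ : 0 < β₁) (hβ₂ : 0 < β₂) (hD : 0 < D) (hδ : 0 < δ)
    (hσ : 1 < sigmaP α₂ β₁ β₂)
    (hv : 0 < v) (M I : ℝ → ℝ) (h : IsFPTW α₂ β₁ β₂ δ D v M I) :
    v ≥ 2 * Real.sqrt (D * (sigmaP α₂ β₁ β₂ - 1) * β₁ / δ) := by
  by_contra hcon
  push_neg at hcon
  set σ := sigmaP α₂ β₁ β₂ with hσdef
  have hσ0 : (0:ℝ) < σ := lt_trans one_pos hσ
  have hdenσ : 0 < β₂ * σ + α₂ := by positivity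
  have haP : 0 < aP α₂ β₁ β₂ := by
    unfold aP; rw [← hσdef]; positivity
  have hbP : 0 < bP α₂ β₁ β₂ := by
    unfold bP; rw [← hσdef]; positivity
  have habP : aP α₂ β₁ β₂ * bP α₂ β₁ β₂ = β₁ * β₂ := by
    unfold aP bP; rw [← hσdef]; field_simp
  -- the squared speed bound
  have hXpos : 0 < D * (σ - 1) * β₁ / δ := by
    have h1 : 0 < σ - 1 := by linarith
    positivity
  have hv2 : δ * v ^ 2 < 4 * (D * ((σ - 1) * β₁)) := by
    have h1 := Real.sq_sqrt hXpos.le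
    have h2 := Real.sqrt_nonneg (D * (σ - 1) * β₁ / δ)
    have h4 : v ^ 2 < 4 * (D * (σ - 1) * β₁ / δ) := by nlinarith
    have h5 : δ * (D * (σ - 1) * β₁ / δ) = D * (σ - 1) * β₁ := by field_simp
    nlinarith
  -- differentiability facts
  have hM2 : ContDiff ℝ (1 + 1 : ℕ) M := by exact_mod_cast h.smoothM
  have hI2 : ContDiff ℝ (1 + 1 : ℕ) I := by exact_mod_cast h.smoothI
  have hMdiff : Differentiable ℝ M := hM2.differentiable (by norm_num)
  have hIdiff : Differentiable ℝ I := hI2.differentiable (by norm_num)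
  have hM'cd : ContDiff ℝ 1 (deriv M) := (contDiff_succ_iff_deriv.mp (by exact_mod_cast hM2)).2.2
  have hI'cd : ContDiff ℝ 1 (deriv I) := (contDiff_succ_iff_deriv.mp (by exact_mod_cast hI2)).2.2
  have hM'diff : Differentiable ℝ (deriv M) := hM'cd.differentiable one_ne_zero
  have hI'diff : Differentiable ℝ (deriv I) := hI'cd.differentiable one_ne_zero
  have hM' : ∀ z, HasDerivAt M (deriv M z) z := fun z => (hMdiff z).hasDerivAt
  have hM'' : ∀ z, HasDerivAt (deriv M) (deriv (deriv M) z) z := fun z => (hM'diff z).hasDerivAt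
  have hI' : ∀ z, HasDerivAt I (deriv I z) z := fun z => (hIdiff z).hasDerivAt
  have hI'' : ∀ z, HasDerivAt (deriv I) (deriv (deriv I) z) z := fun z => (hI'diff z).hasDerivAt
  -- Step C : M < 1 everywhere
  have hMlt1 : ∀ z, M z < 1 := by
    intro z₀
    rcases lt_or_eq_of_le (h.rangeM z₀).2 with hlt | heq
    · exact hlt
    exfalso
    have hmax : IsLocalMax M z₀ := Filter.Eventually.of_forall (fun z => heq ▸ (h.rangeM z).2)
    have hd0 : deriv M z₀ = 0 := hmax.deriv_eq_zero
    set E := fun z => (1 - M z) ^ 2 + (deriv M z) ^ 2 with hEdef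
    set E' := fun z => 2 * (1 - M z) * (-(deriv M z)) + 2 * deriv M z * deriv (deriv M) z
      with hE'def
    have hE : ∀ z, HasDerivAt E (E' z) z := by
      intro z
      have h1 : HasDerivAt (fun z => (1 - M z) ^ 2) (2 * (1 - M z) * (-(deriv M z))) z := by
        have : HasDerivAt (fun y => (1 - M y) ^ 2) _ z := ((hasDerivAt_const z (1:ℝ)).sub (hM' z)).pow 2
        convert this using 1
        simp only [Pi.sub_apply]
        ring
      have h2 : HasDerivAt (fun z => (deriv M z) ^ 2) (2 * deriv M z * deriv (deriv M) z) z := by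
        have : HasDerivAt (fun y => (deriv M y) ^ 2) _ z := (hM'' z).pow 2
        convert this using 1
        ring
      exact h1.add h2
    have hineq : ∀ z, E' z ≤ 2 * E z := by
      intro z
      have hode := h.odeM z
      obtain ⟨hM0, hM1⟩ := h.rangeM z
      obtain ⟨hI0, hI1⟩ := h.rangeI z
      have hq : deriv (deriv M) z = -(v * deriv M z) - I z * M z * (1 - M z) := by linarith
      simp only [hE'def, hEdef]
      rw [hq]
      have hc0 : 0 ≤ I z * M z := mul_nonneg hI0 hM0
      have hc1 : I z * M z ≤ 1 := by nlinarith
      nlinarith [sq_nonneg (1 - M z + deriv M z), sq_nonneg (1 - M z - deriv M z),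
        mul_nonneg hc0 (sq_nonneg (1 - M z + deriv M z)),
        mul_nonneg hc0 (sq_nonneg (1 - M z - deriv M z)),
        mul_nonneg (sub_nonneg.mpr hc1) (add_nonneg (sq_nonneg (1 - M z)) (sq_nonneg (deriv M z))),
        mul_nonneg hv.le (sq_nonneg (deriv M z))]
    have hzero := gron_fwd E E' hE 2 hineq (fun z => by positivity) z₀
      (by simp [hEdef, ← heq, hd0])
    have hM1' : ∀ z, z₀ ≤ z → M z = 1 := by
      intro z hz
      have := hzero z hz
      simp only [hEdef] at this
      nlinarith [sq_nonneg (1 - M z), sq_nonneg (deriv M z)]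
    have hlim : Filter.Tendsto M Filter.atTop (nhds 1) := by
      refine Filter.Tendsto.congr' ?_ tendsto_const_nhds
      filter_upwards [Filter.eventually_ge_atTop z₀] with z hz
      exact (hM1' z hz).symm
    have := tendsto_nhds_unique h.limM_top hlim
    norm_num at this
  -- Step A : choice of ε and lam'
  set gfun := fun ε : ℝ => aP α₂ β₁ β₂ * (bP α₂ β₁ β₂ * (σ - 1) - ε) / (β₂ + α₂ * ε) with hgdef
  have hg0 : gfun 0 = (σ - 1) * β₁ := by
    simp only [hgdef]
    rw [mul_zero, add_zero, sub_zero, div_eq_iff hβ₂.ne']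
    linear_combination (σ - 1) * habP
  have hgc : ContinuousAt gfun 0 := by
    apply ContinuousAt.div
    · fun_prop
    · fun_prop
    · simpa using hβ₂.ne'
  have hev1 : ∀ᶠ ε in nhds (0:ℝ), δ * v ^ 2 < 4 * (D * gfun ε) := by
    have hc : ContinuousAt (fun ε : ℝ => 4 * (D * gfun ε)) 0 := by fun_prop
    have hlt : δ * v ^ 2 < 4 * (D * gfun 0) := by rw [hg0]; exact hv2
    exact continuousAt_const.eventually_lt hc hlt
  have hev2 : ∀ᶠ ε in nhds (0:ℝ), 0 < gfun ε := by
    have hlt : (0:ℝ) < gfun 0 := by rw [hg0]; nlinarith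
    exact continuousAt_const.eventually_lt hgc hlt
  have hev3 : ∀ᶠ ε in nhds (0:ℝ), ε < 1/2 := by
    exact eventually_nhds_iff.mpr ⟨Set.Iio (1/2), fun x hx => hx, isOpen_Iio, by norm_num⟩
  obtain ⟨ε, ⟨hεv, hεg, hεhalf⟩, hεpos⟩ :=
    (((hev1.and (hev2.and hev3)).filter_mono nhdsWithin_le_nhds).and
      self_mem_nhdsWithin).exists (f := nhdsWithin (0:ℝ) (Set.Ioi 0))
  set lam' := gfun ε with hlamdef
  clear_value lam'
  have hlampos : 0 < lam' := hεg
  have hlamiden : lam' * (β₂ + α₂ * ε) = aP α₂ β₁ β₂ * (bP α₂ β₁ β₂ * (σ - 1) - ε) := by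
    rw [hlamdef, hgdef]
    field_simp
  have hnumpos : 0 < bP α₂ β₁ β₂ * (σ - 1) - ε := by
    by_contra hc
    push_neg at hc
    nlinarith [mul_pos hlampos (show (0:ℝ) < β₂ + α₂ * ε by positivity)]
  -- tail point Z
  obtain ⟨Z, hZ⟩ := (Filter.eventually_atTop.mp
    (((h.limM_top.eventually_lt_const hεpos).and (h.limI_top.eventually_lt_const hεpos))))
  -- tail inequality
  have htail : ∀ z, Z ≤ z → lam' * I z ≤ fP α₂ β₁ β₂ (M z) (I z) := by
    intro z hz
    obtain ⟨hMε, hIε⟩ := hZ z hz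
    obtain ⟨hM0, hM1⟩ := h.rangeM z
    obtain ⟨hI0, hI1⟩ := h.rangeI z
    have hdenpos : 0 < α₂ * I z + β₂ * (1 - M z) := by nlinarith
    have hdenle : α₂ * I z + β₂ * (1 - M z) ≤ β₂ + α₂ * ε := by nlinarith
    unfold fP
    rw [le_div_iff₀ hdenpos]
    have hNF : bP α₂ β₁ β₂ * (σ - 1) - ε ≤
        bP α₂ β₁ β₂ * (σ - 1) + bP α₂ β₁ β₂ * M z - I z := by
      nlinarith [mul_nonneg hbP.le hM0]
    nlinarith [mul_le_mul_of_nonneg_left hdenle (mul_nonneg hlampos.le hI0),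
      mul_le_mul_of_nonneg_left hNF (mul_nonneg haP.le hI0),
      mul_pos hlampos (show (0:ℝ) < β₂ + α₂ * ε by positivity), hlamiden,
      mul_le_mul_of_nonneg_right hlamiden.le hI0]
  -- Step B : sine comparison on the tail
  have hk2pos : 0 < lam' / (δ * D) - v ^ 2 / (4 * D ^ 2) := by
    have hrw : lam' / (δ * D) - v ^ 2 / (4 * D ^ 2)
        = (4 * (D * lam') - δ * v ^ 2) / (4 * δ * D ^ 2) := by
      field_simp
    rw [hrw]
    exact div_pos (by linarith) (by positivity)
  set k := Real.sqrt (lam' / (δ * D) - v ^ 2 / (4 * D ^ 2)) with hkdef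
  have hkpos : 0 < k := Real.sqrt_pos.mpr hk2pos
  have hk2 : k ^ 2 = lam' / (δ * D) - v ^ 2 / (4 * D ^ 2) := Real.sq_sqrt hk2pos.le
  clear_value k
  set al := -v / (2 * D) with haldef
  clear_value al
  have key : ∀ a, Z ≤ a → I a = 0 := by
    intro a ha
    set b := a + Real.pi / k with hbdef
    clear_value b
    have hpik : 0 < Real.pi / k := div_pos Real.pi_pos hkpos
    have hab : a < b := by rw [hbdef]; linarith
    set ψ := fun z => Real.exp (al * (z - a)) * Real.sin (k * (z - a)) with hψdef
    set ψ1 := fun z => Real.exp (al * (z - a)) *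
      (al * Real.sin (k * (z - a)) + k * Real.cos (k * (z - a))) with hψ1def
    set ψ2 := fun z => Real.exp (al * (z - a)) *
      ((al ^ 2 - k ^ 2) * Real.sin (k * (z - a)) + 2 * al * k * Real.cos (k * (z - a)))
      with hψ2def
    clear_value ψ ψ1 ψ2
    have hlin : ∀ c z : ℝ, HasDerivAt (fun z : ℝ => c * (z - a)) c z := by
      intro c z
      simpa using ((hasDerivAt_id z).sub_const a).const_mul c
    have hexp : ∀ z : ℝ, HasDerivAt (fun z => Real.exp (al * (z - a)))
        (al * Real.exp (al * (z - a))) z := by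
      intro z
      have := (hlin al z).exp
      convert this using 1
      ring
    have hsin : ∀ z : ℝ, HasDerivAt (fun z => Real.sin (k * (z - a)))
        (k * Real.cos (k * (z - a))) z := by
      intro z
      have := (hlin k z).sin
      convert this using 1
      ring
    have hcos : ∀ z : ℝ, HasDerivAt (fun z => Real.cos (k * (z - a)))
        (-(k * Real.sin (k * (z - a)))) z := by
      intro z
      have := (hlin k z).cos
      convert this using 1
      ring
    have hψ : ∀ z, HasDerivAt ψ (ψ1 z) z := by
      intro z
      have : HasDerivAt (fun y => Real.exp (al * (y - a)) * Real.sin (k * (y - a))) _ z := (hexp z).mul (hsin z)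
      convert this using 1
      simp only [hψ1def]
      ring
    have hψ1 : ∀ z, HasDerivAt ψ1 (ψ2 z) z := by
      intro z
      have h2 : HasDerivAt (fun z => al * Real.sin (k * (z - a)) + k * Real.cos (k * (z - a)))
          (al * (k * Real.cos (k * (z - a))) + k * (-(k * Real.sin (k * (z - a))))) z :=
        ((hsin z).const_mul al).add ((hcos z).const_mul k)
      have : HasDerivAt (fun y => Real.exp (al * (y - a)) *
        (al * Real.sin (k * (y - a)) + k * Real.cos (k * (y - a)))) _ z := (hexp z).mul h2
      convert this using 1
      simp only [hψ2def]
      ring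
    have e1 : δ * D * (al ^ 2 - k ^ 2) + δ * v * al + lam' = 0 := by
      rw [hk2, haldef]
      field_simp
      ring
    have e2 : δ * D * (2 * al * k) + δ * v * k = 0 := by
      rw [haldef]
      field_simp
      ring
    have hψiden : ∀ z, δ * D * ψ2 z + δ * v * ψ1 z = -(lam' * ψ z) := by
      intro z
      simp only [hψdef, hψ1def, hψ2def]
      linear_combination (Real.exp (al * (z - a)) * Real.sin (k * (z - a))) * e1 +
        (Real.exp (al * (z - a)) * Real.cos (k * (z - a))) * e2
    have hodeδ : ∀ z, δ * D * deriv (deriv I) z + δ * v * deriv I z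
        = -(fP α₂ β₁ β₂ (M z) (I z)) := by
      intro z
      linear_combination h.odeI z
    set W := fun z => Real.exp (v / D * z) * (ψ z * deriv I z - I z * ψ1 z) with hWdef
    set Wd := fun z => v / D * Real.exp (v / D * z) * (ψ z * deriv I z - I z * ψ1 z)
      + Real.exp (v / D * z) * (ψ1 z * deriv I z + ψ z * deriv (deriv I) z
        - deriv I z * ψ1 z - I z * ψ2 z) with hWddef
    clear_value W Wd
    have hexp2 : ∀ z : ℝ, HasDerivAt (fun z => Real.exp (v / D * z))
        (v / D * Real.exp (v / D * z)) z := by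
      intro z
      have h1 : HasDerivAt (fun z : ℝ => v / D * z) (v / D) z := by
        simpa using (hasDerivAt_id z).const_mul (v / D)
      have := h1.exp
      convert this using 1
      ring
    have hW : ∀ z, HasDerivAt W (Wd z) z := by
      intro z
      have hinner : HasDerivAt (fun z => ψ z * deriv I z - I z * ψ1 z)
          (ψ1 z * deriv I z + ψ z * deriv (deriv I) z - (deriv I z * ψ1 z + I z * ψ2 z)) z :=
        ((hψ z).mul (hI'' z)).sub ((hI' z).mul (hψ1 z))
      have : HasDerivAt (fun y => Real.exp (v / D * y) * (ψ y * deriv I y - I y * ψ1 y)) _ z :=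
        (hexp2 z).mul hinner
      convert this using 1
      simp only [hWddef]
      ring
    have hvD : v / D * D = v := div_mul_cancel₀ v hD.ne'
    have hψnn : ∀ z ∈ Set.Icc a b, 0 ≤ ψ z := by
      intro z hz
      simp only [hψdef]
      apply mul_nonneg (Real.exp_pos _).le
      apply Real.sin_nonneg_of_nonneg_of_le_pi
      · exact mul_nonneg hkpos.le (by linarith [hz.1])
      · have hzb : z - a ≤ Real.pi / k := by
          have := hz.2
          rw [hbdef] at this
          linarith
        calc k * (z - a) ≤ k * (Real.pi / k) := mul_le_mul_of_nonneg_left hzb hkpos.le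
          _ = Real.pi := by field_simp
    have hWdnp : ∀ z ∈ Set.Icc a b, Wd z ≤ 0 := by
      intro z hz
      have hmain : Wd z * (δ * D)
          = Real.exp (v / D * z) * (ψ z * (lam' * I z - fP α₂ β₁ β₂ (M z) (I z))) := by
        simp only [hWddef]
        linear_combination (Real.exp (v / D * z) * ψ z) * hodeδ z
          - (Real.exp (v / D * z) * I z) * hψiden z
          + (δ * Real.exp (v / D * z) * (ψ z * deriv I z - I z * ψ1 z)) * hvD
      have h3 : lam' * I z - fP α₂ β₁ β₂ (M z) (I z) ≤ 0 :=
        sub_nonpos.mpr (htail z (le_trans ha hz.1))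
      have h2 : Wd z * (δ * D) ≤ 0 := by
        rw [hmain]
        exact mul_nonpos_of_nonneg_of_nonpos (Real.exp_pos _).le
          (mul_nonpos_of_nonneg_of_nonpos (hψnn z hz) h3)
      by_contra hpos
      push_neg at hpos
      exact absurd h2 (not_le.mpr (mul_pos hpos (mul_pos hδ hD)))
    have hanti : AntitoneOn W (Set.Icc a b) := by
      apply antitoneOn_of_deriv_nonpos (convex_Icc a b)
        (fun z _ => (hW z).differentiableAt.continuousAt.continuousWithinAt)
        (fun z hz => (hW z).differentiableAt.differentiableWithinAt)
        (fun z hz => ?_)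
      rw [interior_Icc] at hz
      rw [(hW z).deriv]
      exact hWdnp z (Set.Ioo_subset_Icc_self hz)
    have hkb : k * (b - a) = Real.pi := by
      rw [hbdef]
      field_simp
      ring
    have hψa : ψ a = 0 := by simp [hψdef]
    have hψ1a : ψ1 a = k := by simp [hψ1def]
    have hψb : ψ b = 0 := by
      simp only [hψdef]
      rw [hkb]
      simp
    have hψ1b : ψ1 b = -(k * Real.exp (al * (b - a))) := by
      simp only [hψ1def]
      rw [hkb]
      simp [Real.sin_pi, Real.cos_pi]
      ring
    have hWa : W a = -(Real.exp (v / D * a) * (I a * k)) := by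
      simp only [hWdef, hψa, hψ1a]
      ring
    have hWb : W b = Real.exp (v / D * b) * (I b * (k * Real.exp (al * (b - a)))) := by
      simp only [hWdef, hψb, hψ1b]
      ring
    have h1 : W b ≤ W a :=
      hanti (Set.left_mem_Icc.mpr hab.le) (Set.right_mem_Icc.mpr hab.le) hab.le
    have h2 : 0 ≤ W b := by
      rw [hWb]
      have := (h.rangeI b).1
      positivity
    have h3 := (h.rangeI a).1
    have h4 : I a ≤ 0 := by
      have h5 : Real.exp (v / D * a) * (I a * k) ≤ 0 := by
        rw [hWa] at h1
        linarith
      have h6 : I a * k ≤ 0 := by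
        by_contra hpos
        push_neg at hpos
        exact absurd h5 (not_le.mpr (mul_pos (Real.exp_pos _) hpos))
      by_contra hpos
      push_neg at hpos
      exact absurd h6 (not_le.mpr (mul_pos hpos hkpos))
    exact le_antisymm h4 h3
  -- Step D : backward propagation of the zero state
  have hIev : I =ᶠ[nhds (Z+1)] (fun _ => (0:ℝ)) := by
    filter_upwards [Ioi_mem_nhds (show Z < Z+1 by linarith)] with z hz
    exact key z (le_of_lt hz)
  have hdIZ : deriv I (Z+1) = 0 := by
    rw [hIev.deriv_eq]
    simp
  have hIZ : I (Z+1) = 0 := key (Z+1) (by linarith)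
  have hIall : ∀ c, I c = 0 := by
    intro c
    rcases le_or_gt (Z+1) c with hc | hc
    · exact key c (by linarith)
    obtain ⟨w, hwmem, hwmin⟩ := (isCompact_Icc (a := c) (b := Z+1)).exists_isMinOn
      (Set.nonempty_Icc.mpr hc.le)
      ((continuous_const.sub hMdiff.continuous).continuousOn (f := fun z => 1 - M z))
    set η := 1 - M w with hηdef
    have hηpos : 0 < η := by
      have := hMlt1 w
      rw [hηdef]
      linarith
    have hηle : ∀ z ∈ Set.Icc c (Z+1), η ≤ 1 - M z := fun z hz => hwmin hz
    set CN := bP α₂ β₁ β₂ * (σ - 1) + bP α₂ β₁ β₂ + 1 with hCNdef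
    have hCNpos : 0 < CN := by
      rw [hCNdef]
      have h1 : 0 < bP α₂ β₁ β₂ * (σ - 1) := mul_pos hbP (by linarith)
      linarith
    set K := aP α₂ β₁ β₂ * CN / (β₂ * η) with hKdef
    have hKpos : 0 < K := by
      rw [hKdef]
      exact div_pos (mul_pos haP hCNpos) (mul_pos hβ₂ hηpos)
    have hfb : ∀ z ∈ Set.Icc c (Z+1), |fP α₂ β₁ β₂ (M z) (I z)| ≤ K * I z := by
      intro z hz
      obtain ⟨hM0, hM1⟩ := h.rangeM z
      obtain ⟨hI0, hI1⟩ := h.rangeI z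
      have hηz := hηle z hz
      have hb1 : β₂ * η ≤ β₂ * (1 - M z) := mul_le_mul_of_nonneg_left hηz hβ₂.le
      have hb2 : 0 < β₂ * η := mul_pos hβ₂ hηpos
      have hb3 : 0 ≤ α₂ * I z := mul_nonneg hα₂.le hI0
      have hden : 0 < α₂ * I z + β₂ * (1 - M z) := by linarith
      have hdenge : β₂ * η ≤ α₂ * I z + β₂ * (1 - M z) := by linarith
      have hNF : |bP α₂ β₁ β₂ * (σ - 1) + bP α₂ β₁ β₂ * M z - I z| ≤ CN := by
        rw [abs_le, hCNdef]
        have hn1 : 0 ≤ bP α₂ β₁ β₂ * M z := mul_nonneg hbP.le hM0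
        have hn2 : bP α₂ β₁ β₂ * M z ≤ bP α₂ β₁ β₂ := mul_le_of_le_one_right hbP.le hM1
        have hn3 : 0 < bP α₂ β₁ β₂ * (σ - 1) := mul_pos hbP (by linarith)
        constructor
        · linarith
        · linarith
      unfold fP
      rw [abs_div, abs_of_pos hden, abs_mul, abs_mul, abs_of_pos haP, abs_of_nonneg hI0]
      have heqK : K * I z = aP α₂ β₁ β₂ * CN * I z / (β₂ * η) := by
        rw [hKdef]
        ring
      rw [heqK]
      apply div_le_div₀ (mul_nonneg (mul_nonneg haP.le hCNpos.le) hI0) ?_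
        (mul_pos hβ₂ hηpos) hdenge
      have := mul_le_mul_of_nonneg_left hNF (mul_nonneg haP.le hI0)
      linarith
    set E := fun z => (I z) ^ 2 + (deriv I z) ^ 2 with hEdef
    set E' := fun z => 2 * I z * deriv I z + 2 * deriv I z * deriv (deriv I) z with hE'def
    have hE : ∀ z, HasDerivAt E (E' z) z := by
      intro z
      have h1 : HasDerivAt (fun z => (I z) ^ 2) (2 * I z * deriv I z) z := by
        have : HasDerivAt (fun y => (I y) ^ 2) _ z := (hI' z).pow 2
        convert this using 1
        ring
      have h2 : HasDerivAt (fun z => (deriv I z) ^ 2) (2 * deriv I z * deriv (deriv I) z) z := by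
        have : HasDerivAt (fun y => (deriv I y) ^ 2) _ z := (hI'' z).pow 2
        convert this using 1
        ring
      exact h1.add h2
    set C0 := (δ * D + 2 * v * δ + K) / (δ * D) with hC0def
    have hC0δD : C0 * (δ * D) = δ * D + 2 * v * δ + K := by
      rw [hC0def]
      field_simp
    have hineqD : ∀ z ∈ Set.Icc c (Z+1), -(C0 * E z) ≤ E' z := by
      intro z hz
      obtain ⟨hI0, hI1⟩ := h.rangeI z
      have hfz := hfb z hz
      have hode2 : δ * D * deriv (deriv I) z + δ * v * deriv I z
          = -(fP α₂ β₁ β₂ (M z) (I z)) := by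
        linear_combination h.odeI z
      have hform : δ * D * E' z = 2 * δ * D * I z * deriv I z - 2 * δ * v * (deriv I z) ^ 2
          - 2 * deriv I z * fP α₂ β₁ β₂ (M z) (I z) := by
        simp only [hE'def]
        linear_combination (2 * deriv I z) * hode2
      have c1 : 2 * deriv I z * fP α₂ β₁ β₂ (M z) (I z)
          ≤ 2 * |deriv I z| * |fP α₂ β₁ β₂ (M z) (I z)| := by
        have := le_abs_self (2 * deriv I z * fP α₂ β₁ β₂ (M z) (I z))
        rw [abs_mul, abs_mul, abs_of_pos (show (0:ℝ) < 2 by norm_num)] at this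
        linarith
      have c2 : 2 * |deriv I z| * |fP α₂ β₁ β₂ (M z) (I z)| ≤ 2 * |deriv I z| * (K * I z) :=
        mul_le_mul_of_nonneg_left hfz (by positivity)
      have c3 : 2 * |deriv I z| * (K * I z) ≤ K * ((I z) ^ 2 + (deriv I z) ^ 2) :=
        aux_cross K (I z) (deriv I z) hKpos.le
      have c4 : -(2 * deriv I z * fP α₂ β₁ β₂ (M z) (I z))
          ≥ -(K * ((I z) ^ 2 + (deriv I z) ^ 2)) := by linarith
      have hδDkey : -((δ * D + 2 * v * δ + K) * E z) ≤ δ * D * E' z := by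
        rw [hform]
        simp only [hEdef]
        linarith [c4, mul_nonneg (mul_nonneg hδ.le hD.le) (sq_nonneg (I z + deriv I z)),
          mul_nonneg (mul_nonneg hδ.le hv.le) (sq_nonneg (I z))]
      have hEp : E' z = δ * D * E' z / (δ * D) := by
        field_simp
      rw [hEp, le_div_iff₀ (mul_pos hδ hD)]
      calc -(C0 * E z) * (δ * D) = -((δ * D + 2 * v * δ + K) * E z) := by
            linear_combination (-(E z)) * hC0δD
        _ ≤ δ * D * E' z := hδDkey
    have h0E : E (Z+1) = 0 := by
      simp only [hEdef]
      rw [hIZ, hdIZ]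
      norm_num
    have hEc := gron_bwd E E' hE C0 c (Z+1) hc.le hineqD
      (fun z => by simp only [hEdef]; positivity) h0E
    have hsq : (I c) ^ 2 ≤ 0 := by
      simp only [hEdef] at hEc
      linarith [sq_nonneg (deriv I c)]
    have := le_antisymm hsq (sq_nonneg _)
    exact pow_eq_zero_iff (by norm_num) |>.mp this
  -- final contradiction with the limit at -∞
  have hI0fun : I = fun _ => (0:ℝ) := funext hIall
  have hlim0 : Filter.Tendsto I Filter.atBot (nhds 0) := by
    rw [hI0fun]
    exact tendsto_const_nhds
  have huniq := tendsto_nhds_unique h.limI_bot hlim0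
  have hbσ : 0 < bP α₂ β₁ β₂ * σ := mul_pos hbP hσ0
  rw [hσdef] at hbσ
  exact absurd huniq (ne_of_gt hbσ)
end
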